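/- arXiv:1409.3017 — 3 statements merged into one kernel-verified Lean document; each statement's English description precedes it below -/
import Mathlib

section
/- Let α > 0 and let ν_α be the product probability measure ⊗_p m_α on the infinite polydisc 𝔻^∞ with coordinates indexed by the prime numbers, where dm_α(w) = Γ(α)^{−1} (log(1/|w|²))^{α−1} dm(w) and m is normalized Lebesgue area measure on 𝔻. Then for every finitely supported sequence (a_n)_{n≥1} of complex numbers, ∫_{𝔻^∞} |Σ_{n=1}^∞ a_n z(n)|² dν_α(z) = Σ_{n=1}^∞ |a_n|²/d(n)^α, where z(n) := ∏_p z_p^{κ_p} for n = ∏_p p^{κ_p} and d(n) is the number of divisors of n. -/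
open Complex Filter MeasureTheory Finset

noncomputable section

/-- `numDiv n` is the number of divisors `d(n)` of `n`. -/
def numDiv (n : ℕ) : ℕ := n.divisors.card

/-- Lebesgue area measure on the open unit disc `𝔻 ⊆ ℂ`, normalized so that `𝔻` has total
mass `1`. -/
def normAreaDisc : Measure ℂ :=
  (ENNReal.ofReal Real.pi)⁻¹ • (volume.restrict (Metric.ball (0 : ℂ) 1))

/-- The measure `dm_α(w) = Γ(α)⁻¹ (log(1/|w|²))^{α-1} dm(w)` on the unit disc. -/
def mAlpha (α : ℝ) : Measure ℂ :=
  normAreaDisc.withDensity fun w =>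
    ENNReal.ofReal ((Real.Gamma α)⁻¹ * (Real.log (1 / ‖w‖ ^ 2)) ^ (α - 1))

/-- The completely multiplicative extension `z(n) = ∏_p z_p^{κ_p}` of a point
`z ∈ ℂ^{primes}`, where `n = ∏_p p^{κ_p}`. -/
def primeExt (z : Nat.Primes → ℂ) (n : ℕ) : ℂ :=
  n.factorization.prod fun p k => (if hp : p.Prime then z ⟨p, hp⟩ else 0) ^ k

open Set Real
open scoped ENNReal NNReal

lemma img_log : (fun r : ℝ => -2 * Real.log r) '' Set.Ioo 0 1 = Set.Ioi 0 := by
  ext u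
  constructor
  · rintro ⟨r, ⟨hr0, hr1⟩, rfl⟩
    have : Real.log r < 0 := Real.log_neg hr0 hr1
    simp only [Set.mem_Ioi]; nlinarith
  · intro hu
    refine ⟨Real.exp (-(u / 2)), ⟨Real.exp_pos _, ?_⟩, ?_⟩
    · exact Real.exp_lt_one_iff.mpr (by simp only [Set.mem_Ioi] at hu; linarith)
    · simp only [Real.log_exp]; ring

lemma radial (α : ℝ) (hα : 0 < α) (k : ℕ) :
    ∫ r in Set.Ioo (0:ℝ) 1, r ^ (2*k+1) * (-2 * Real.log r) ^ (α-1) =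
      Real.Gamma α / (2 * ((k:ℝ)+1) ^ α) := by
  have hk1 : (0:ℝ) < (k:ℝ) + 1 := by positivity
  have key := integral_image_eq_integral_abs_deriv_smul (f' := fun r : ℝ => -2 / r)
    measurableSet_Ioo (s := Set.Ioo (0:ℝ) 1) (f := fun r => -2 * Real.log r)
    (fun x hx => ((Real.hasDerivAt_log (ne_of_gt hx.1)).const_mul (-2)).hasDerivWithinAt.congr_deriv
      (by field_simp))
    (fun x hx y hy h => by
      have h' : -2 * Real.log x = -2 * Real.log y := h
      have hx' : Real.log x = Real.log y := by linarith
      exact Real.log_injOn_pos (Set.mem_Ioi.mpr hx.1) (Set.mem_Ioi.mpr hy.1) hx')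
    (fun u => u ^ (α-1) * Real.exp (-(((k:ℝ)+1) * u)))
  rw [img_log] at key
  rw [Real.integral_rpow_mul_exp_neg_mul_Ioi hα hk1] at key
  have congr1 : ∀ r ∈ Set.Ioo (0:ℝ) 1,
      |(-2 : ℝ) / r| • ((-2 * Real.log r) ^ (α-1) * Real.exp (-(((k:ℝ)+1) * (-2 * Real.log r))))
        = 2 * (r ^ (2*k+1) * (-2 * Real.log r) ^ (α-1)) := by
    intro r hr
    have hr0 : (0:ℝ) < r := hr.1
    have h1 : |(-2 : ℝ) / r| = 2 / r := by
      rw [abs_div, abs_of_pos hr0, abs_neg, _root_.abs_two]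
    have h2 : Real.exp (-(((k:ℝ)+1) * (-2 * Real.log r))) = r ^ (2*k+2) := by
      rw [show (-(((k:ℝ)+1) * (-2 * Real.log r))) = Real.log r * (2*(k:ℝ)+2) by ring]
      rw [← Real.rpow_def_of_pos hr0]
      rw [show ((2:ℝ)*(k:ℝ)+2) = ((2*k+2 : ℕ) : ℝ) by push_cast; ring, Real.rpow_natCast]
    rw [h1, h2, smul_eq_mul]
    have h3 : r ^ (2*k+2) = r ^ (2*k+1) * r := by ring
    rw [h3]
    field_simp
  rw [setIntegral_congr_fun measurableSet_Ioo congr1] at key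
  rw [integral_const_mul, one_div, Real.inv_rpow hk1.le] at key
  have hne : ((k:ℝ)+1)^α ≠ 0 := (Real.rpow_pos_of_pos hk1 α).ne'
  have hΓ : (0:ℝ) < Real.Gamma α := Real.Gamma_pos_of_pos hα
  field_simp at key ⊢
  linarith

lemma measurable_rpow_const (c : ℝ) : Measurable fun x : ℝ => x ^ c := by
  have h : (fun x : ℝ => x ^ c) = fun x : ℝ => (((x:ℂ)) ^ ((c:ℝ):ℂ)).re := funext fun x => Real.rpow_def x c
  rw [h]
  have h2 : (fun z : ℂ => z ^ ((c:ℝ):ℂ))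
      = fun z => if z = 0 then (if ((c:ℝ):ℂ) = 0 then 1 else 0)
          else Complex.exp (Complex.log z * ((c:ℝ):ℂ)) :=
    funext fun z => by rw [Complex.cpow_def]
  have hm : Measurable fun z : ℂ => z ^ ((c:ℝ):ℂ) := by
    rw [h2]
    exact Measurable.ite (measurableSet_eq) measurable_const
      (Complex.measurable_exp.comp (Complex.measurable_log.mul_const _))
  exact Complex.measurable_re.comp (hm.comp Complex.measurable_ofReal)

lemma hH (j k : ℕ) : ∫ θ in Set.Ioo (-π) π, Complex.exp ((((j:ℂ)-(k:ℂ)) * (θ:ℂ)) * Complex.I) =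
    if j = k then ((2*π : ℝ) : ℂ) else 0 := by
  by_cases hjk : j = k
  · subst hjk
    simp only [sub_self, zero_mul, Complex.exp_zero, if_pos]
    rw [setIntegral_const, Real.volume_real_Ioo_of_le (by linarith [Real.pi_pos]),
      Complex.real_smul]
    push_cast
    ring
  · rw [if_neg hjk]
    rw [← MeasureTheory.integral_Ioc_eq_integral_Ioo,
      ← intervalIntegral.integral_of_le (by linarith [Real.pi_pos] : -π ≤ π)]
    have hc : ((j:ℂ)-(k:ℂ)) * Complex.I ≠ 0 :=
      mul_ne_zero (sub_ne_zero.mpr (by exact_mod_cast hjk)) Complex.I_ne_zero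
    have hre : ∀ θ : ℝ, (((j:ℂ)-(k:ℂ)) * (θ:ℂ)) * Complex.I = (((j:ℂ)-(k:ℂ)) * Complex.I) * θ := by
      intro θ; ring
    simp_rw [hre]
    rw [integral_exp_mul_complex hc]
    have h1 : Complex.exp (((j:ℂ)-(k:ℂ)) * (2*(π:ℂ)*Complex.I)) = 1 := by
      have h2 := Complex.exp_int_mul_two_pi_mul_I ((j:ℤ) - (k:ℤ))
      push_cast at h2
      exact h2
    have key : Complex.exp ((((j:ℂ)-(k:ℂ)) * Complex.I) * (π:ℂ))
        = Complex.exp ((((j:ℂ)-(k:ℂ)) * Complex.I) * ((-π:ℝ):ℂ)) := by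
      rw [show (((j:ℂ)-(k:ℂ)) * Complex.I) * (π:ℂ)
          = (((j:ℂ)-(k:ℂ)) * Complex.I) * ((-π:ℝ):ℂ) + ((j:ℂ)-(k:ℂ)) * (2*(π:ℂ)*Complex.I) by
        push_cast; ring]
      rw [Complex.exp_add, h1, mul_one]
    rw [key, sub_self, zero_div]

lemma moment (α : ℝ) (hα : 0 < α) (j k : ℕ) :
    ∫ w, w ^ j * (starRingEnd ℂ) w ^ k ∂(mAlpha α) =
      if j = k then ((((j:ℝ) + 1) ^ (-α) : ℝ) : ℂ) else 0 := by
  set ρ : ℂ → ℝ := fun w => (Real.Gamma α)⁻¹ * (Real.log (1 / ‖w‖ ^ 2)) ^ (α - 1) with hρ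
  have hρmeas : Measurable ρ := by
    apply measurable_const.mul
    exact (measurable_rpow_const (α-1)).comp
      (Real.measurable_log.comp (measurable_const.div ((measurable_norm).pow_const 2)))
  set F : ℂ → ℂ := fun w => w ^ j * (starRingEnd ℂ) w ^ k with hF
  have h0 : mAlpha α = normAreaDisc.withDensity fun w => (((ρ w).toNNReal : ℝ≥0) : ℝ≥0∞) := rfl
  rw [h0, integral_withDensity_eq_integral_smul hρmeas.real_toNNReal F]
  rw [normAreaDisc, integral_smul_measure, ENNReal.toReal_inv,
    ENNReal.toReal_ofReal Real.pi_pos.le]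
  rw [← integral_indicator measurableSet_ball]
  rw [← Complex.integral_comp_polarCoord_symm]
  set T : Set (ℝ × ℝ) := Set.Ioo (0:ℝ) 1 ×ˢ Set.Ioo (-π) π with hT
  set Gr : ℝ → ℂ := fun r => ((r ^ (j+k+1) * ((Real.Gamma α)⁻¹ * (-2*Real.log r)^(α-1)) : ℝ) : ℂ)
    with hGr
  set Hθ : ℝ → ℂ := fun θ => Complex.exp ((((j:ℂ)-(k:ℂ)) * (θ:ℂ)) * Complex.I) with hHθ
  have claim : ∀ p ∈ polarCoord.target,
      p.1 • (Metric.ball (0:ℂ) 1).indicator (fun w => (ρ w).toNNReal • F w)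
          (Complex.polarCoord.symm p)
        = T.indicator (fun p => Gr p.1 * Hθ p.2) p := by
    rintro ⟨r, θ⟩ hp
    rw [polarCoord_target] at hp
    obtain ⟨hr0, hθ⟩ := hp
    simp only [Set.mem_Ioi] at hr0
    have habs : ‖Complex.polarCoord.symm (r, θ)‖ = r := by
      rw [Complex.norm_polarCoord_symm]; exact abs_of_pos hr0
    have hw : Complex.polarCoord.symm (r, θ) = (r:ℂ) * Complex.exp ((θ:ℂ) * Complex.I) := by
      rw [Complex.polarCoord_symm_apply, Complex.exp_mul_I]; push_cast; ring
    by_cases hr1 : r < 1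
    · have hmem : Complex.polarCoord.symm (r, θ) ∈ Metric.ball (0:ℂ) 1 := by
        rw [Metric.mem_ball, dist_zero_right, habs]; exact hr1
      have hmemT : (r, θ) ∈ T := ⟨⟨hr0, hr1⟩, hθ⟩
      rw [Set.indicator_of_mem hmem, Set.indicator_of_mem hmemT]
      have hnorm : ‖Complex.polarCoord.symm (r, θ)‖ = r := by
        rw [habs]
      have hlog : Real.log (1 / ‖Complex.polarCoord.symm (r, θ)‖ ^ 2) = -2 * Real.log r := by
        rw [hnorm, one_div, Real.log_inv, Real.log_pow]; push_cast; ring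
      have hρval : ρ (Complex.polarCoord.symm (r, θ))
          = (Real.Gamma α)⁻¹ * (-2*Real.log r)^(α-1) := by
        rw [hρ]; simp only []; rw [hlog]
      have hρnn : 0 ≤ ρ (Complex.polarCoord.symm (r, θ)) := by
        rw [hρval]
        have hbase : (0:ℝ) ≤ -2 * Real.log r := by
          have := Real.log_nonpos hr0.le hr1.le; linarith
        have h1 : (0:ℝ) ≤ (Real.Gamma α)⁻¹ := by positivity
        exact mul_nonneg h1 (Real.rpow_nonneg hbase _)
      simp only [NNReal.smul_def, Real.coe_toNNReal _ hρnn]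
      rw [hF]
      simp only []
      rw [hρval, hw]
      set A : ℂ := Complex.exp ((θ:ℂ) * Complex.I) with hA
      have hAne : A ≠ 0 := Complex.exp_ne_zero _
      have hconj : (starRingEnd ℂ) ((r:ℂ) * A) = (r:ℂ) * A⁻¹ := by
        rw [map_mul, Complex.conj_ofReal, hA, ← Complex.exp_conj, map_mul, Complex.conj_ofReal,
          Complex.conj_I, mul_neg, Complex.exp_neg]
      have hE : Complex.exp ((((j:ℂ)-(k:ℂ)) * (θ:ℂ)) * Complex.I) = A ^ j * (A ^ k)⁻¹ := by
        rw [show (((j:ℂ)-(k:ℂ)) * (θ:ℂ)) * Complex.I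
            = (j:ℂ)*((θ:ℂ)*Complex.I) + -((k:ℂ)*((θ:ℂ)*Complex.I)) by ring]
        rw [Complex.exp_add, Complex.exp_neg, Complex.exp_nat_mul, Complex.exp_nat_mul]
      rw [hconj, hGr, hHθ]
      simp only []
      rw [hE]
      rw [Complex.real_smul, Complex.real_smul]
      push_cast
      rw [mul_pow, mul_pow, inv_pow]
      field_simp
      ring
    · have hnmem : Complex.polarCoord.symm (r, θ) ∉ Metric.ball (0:ℂ) 1 := by
        rw [Metric.mem_ball, dist_zero_right, habs]; exact fun h => hr1 h
      have hnmemT : (r, θ) ∉ T := fun h => hr1 h.1.2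
      rw [Set.indicator_of_notMem hnmem, Set.indicator_of_notMem hnmemT, smul_zero]
  rw [setIntegral_congr_fun polarCoord.open_target.measurableSet claim]
  rw [setIntegral_indicator (by rw [hT]; exact measurableSet_Ioo.prod measurableSet_Ioo)]
  rw [Set.inter_eq_self_of_subset_right
    (by rw [polarCoord_target, hT]; exact Set.prod_mono Set.Ioo_subset_Ioi_self le_rfl)]
  have hsplit : (volume : Measure (ℝ×ℝ)).restrict T
      = (volume.restrict (Set.Ioo 0 1)).prod (volume.restrict (Set.Ioo (-π) π)) := by
    rw [hT, Measure.prod_restrict]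
    rfl
  rw [hsplit, integral_prod_mul Gr Hθ, hH j k]
  by_cases hjk : j = k
  · subst hjk
    rw [if_pos rfl, if_pos rfl]
    have hGrInt : ∫ r in Set.Ioo (0:ℝ) 1, Gr r
        = (((Real.Gamma α)⁻¹ * (Real.Gamma α / (2 * ((j:ℝ)+1) ^ α)) : ℝ) : ℂ) := by
      simp only [hGr]
      rw [show (∫ r in Set.Ioo (0:ℝ) 1,
            ((r ^ (j+j+1) * ((Real.Gamma α)⁻¹ * (-2*Real.log r)^(α-1)) : ℝ) : ℂ))
          = ((∫ r in Set.Ioo (0:ℝ) 1,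
            r ^ (j+j+1) * ((Real.Gamma α)⁻¹ * (-2*Real.log r)^(α-1)) : ℝ) : ℂ) from
        integral_ofReal]
      rw [Complex.ofReal_inj]
      have hcg : ∀ r : ℝ, r ^ (j+j+1) * ((Real.Gamma α)⁻¹ * (-2*Real.log r)^(α-1))
          = (Real.Gamma α)⁻¹ * (r ^ (2*j+1) * (-2*Real.log r)^(α-1)) := fun r => by
        rw [show j+j+1 = 2*j+1 by ring]; ring
      simp_rw [hcg]
      rw [integral_const_mul, radial α hα j]
    rw [hGrInt, Complex.real_smul, ← Complex.ofReal_mul, ← Complex.ofReal_mul,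
      Complex.ofReal_inj]
    have hΓ : (0:ℝ) < Real.Gamma α := Real.Gamma_pos_of_pos hα
    have hj1 : (0:ℝ) < (j:ℝ) + 1 := by positivity
    rw [Real.rpow_neg hj1.le]
    have hne : ((j:ℝ)+1)^α ≠ 0 := (Real.rpow_pos_of_pos hj1 α).ne'
    field_simp
    try ring
  · rw [if_neg hjk, if_neg hjk, mul_zero, smul_zero]

lemma pi_aux {ι E : Type*} [Fintype ι] [MeasurableSpace E] (μ : Measure E) [SigmaFinite μ]
    (f : ι → E → ℂ) :
    ∫ x : ι → E, ∏ i, f i (x i) ∂(Measure.pi fun _ => μ) = ∏ i, ∫ w, f i w ∂μ := by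
  letI : MeasureSpace E := ⟨μ⟩
  haveI : SigmaFinite (volume : Measure E) := ‹_›
  exact MeasureTheory.integral_fintype_prod_eq_prod f

/-- if `ν_α` is the product measure `⊗_p m_α` on the infinite polydisc
(characterized by its values on cylinder sets), then for every finitely supported
coefficient sequence `∫ |∑ a_n z(n)|² dν_α(z) = ∑ |a_n|²/d(n)^α`. -/
theorem statement5 (α : ℝ) (hα : 0 < α) (να : Measure (Nat.Primes → ℂ))
    [IsProbabilityMeasure να]
    (hprod : ∀ (S : Finset Nat.Primes) (B : Nat.Primes → Set ℂ),
      (∀ p, MeasurableSet (B p)) →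
      να {z | ∀ p ∈ S, z p ∈ B p} = ∏ p ∈ S, mAlpha α (B p))
    (a : ℕ → ℂ) (N : ℕ) (ha : ∀ n, N < n → a n = 0) :
    ∫ z, ‖∑ n ∈ Finset.Icc 1 N, a n * primeExt z n‖ ^ 2 ∂να =
      ∑ n ∈ Finset.Icc 1 N, ‖a n‖ ^ 2 / (numDiv n : ℝ) ^ α := by
  classical
  -- mAlpha is a probability measure
  have hmuniv : mAlpha α Set.univ = 1 := by
    have h := hprod {⟨2, Nat.prime_two⟩} (fun _ => Set.univ) (fun _ => MeasurableSet.univ)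
    have h' := h.symm
    simp at h'
    have x1 : (mAlpha α) Set.univ ^ 1 = 1 := h'
    rw [pow_one] at x1
    exact x1
  haveI hPμ : IsProbabilityMeasure (mAlpha α) := ⟨hmuniv⟩
  -- the finite set of relevant primes
  set S : Finset Nat.Primes := ((Finset.range (N+1)).filter Nat.Prime).attach.image
    (fun q => ⟨q.1, (Finset.mem_filter.mp q.2).2⟩) with hS
  have hmemS : ∀ (p : Nat.Primes) (n : ℕ), n ∈ Finset.Icc 1 N → (p:ℕ) ∣ n → p ∈ S := by
    intro p n hn hdvd
    obtain ⟨h1, h2⟩ := Finset.mem_Icc.mp hn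
    have hple : (p:ℕ) ≤ N := le_trans (Nat.le_of_dvd (by omega) hdvd) h2
    refine Finset.mem_image.mpr ⟨⟨(p:ℕ), ?_⟩, Finset.mem_attach _ _, ?_⟩
    · exact Finset.mem_filter.mpr ⟨Finset.mem_range.mpr (by omega), p.2⟩
    · exact Subtype.ext rfl
  set T : Finset ℕ := S.image (fun p : Nat.Primes => (p:ℕ)) with hTdef
  have hTinj : ∀ x ∈ S, ∀ y ∈ S, (x:ℕ) = (y:ℕ) → x = y := fun x _ y _ h => Subtype.ext h
  have hTsub : ∀ n ∈ Finset.Icc 1 N, n.primeFactors ⊆ T := by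
    intro n hn q hq
    exact Finset.mem_image.mpr ⟨⟨q, Nat.prime_of_mem_primeFactors hq⟩,
      hmemS _ n hn (Nat.dvd_of_mem_primeFactors hq), rfl⟩
  -- primeExt as a product over S
  have hPE : ∀ (z : Nat.Primes → ℂ), ∀ n ∈ Finset.Icc 1 N,
      primeExt z n = ∏ p ∈ S, z p ^ (n.factorization (p:ℕ)) := by
    intro z n hn
    rw [primeExt, Finsupp.prod]
    have hsub : (n.factorization).support ⊆ T := by
      rw [Nat.support_factorization]; exact hTsub n hn
    rw [Finset.prod_subset hsub (fun q _ hq' => by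
      rw [Finsupp.notMem_support_iff.mp hq', pow_zero])]
    rw [hTdef, Finset.prod_image hTinj]
    refine Finset.prod_congr rfl fun p _ => ?_
    rcases p with ⟨p, hp⟩
    simp [hp]
  -- numDiv as a product over S
  have hnd : ∀ n ∈ Finset.Icc 1 N, numDiv n = ∏ p ∈ S, (n.factorization (p:ℕ) + 1) := by
    intro n hn
    obtain ⟨h1, _⟩ := Finset.mem_Icc.mp hn
    rw [numDiv, Nat.card_divisors (by omega)]
    rw [Finset.prod_subset (hTsub n hn) (fun q _ hq' => by
      rw [← Nat.support_factorization] at hq'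
      simp [Finsupp.notMem_support_iff.mp hq'])]
    rw [hTdef, Finset.prod_image hTinj]
  -- distinct numbers differ at a prime of S
  have hdiff : ∀ m ∈ Finset.Icc 1 N, ∀ n ∈ Finset.Icc 1 N, m ≠ n →
      ∃ p ∈ S, m.factorization (p:ℕ) ≠ n.factorization (p:ℕ) := by
    intro m hm n hn hmn
    by_contra hco
    push_neg at hco
    obtain ⟨hm1, _⟩ := Finset.mem_Icc.mp hm
    obtain ⟨hn1, _⟩ := Finset.mem_Icc.mp hn
    apply hmn
    have heq : m.factorization = n.factorization := by
      ext q
      by_cases hq : q.Prime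
      · by_cases hdm : q ∣ m
        · exact hco ⟨q, hq⟩ (hmemS ⟨q, hq⟩ m hm hdm)
        · by_cases hdn : q ∣ n
          · exact hco ⟨q, hq⟩ (hmemS ⟨q, hq⟩ n hn hdn)
          · rw [Nat.factorization_eq_zero_of_not_dvd hdm,
              Nat.factorization_eq_zero_of_not_dvd hdn]
      · rw [Nat.factorization_eq_zero_of_not_prime _ hq,
          Nat.factorization_eq_zero_of_not_prime _ hq]
    exact Nat.factorization_inj (by simp only [Set.mem_setOf_eq]; omega)
      (by simp only [Set.mem_setOf_eq]; omega) heq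
  -- the projection map and pushforward
  have hπmeas : Measurable (fun (z : Nat.Primes → ℂ) (p : {x // x ∈ S}) => z p.1) :=
    measurable_pi_lambda _ fun p => measurable_pi_apply _
  have hmap : Measure.map (fun (z : Nat.Primes → ℂ) (p : {x // x ∈ S}) => z p.1) να
      = Measure.pi (fun _ : {x // x ∈ S} => mAlpha α) := by
    refine (Measure.pi_eq fun s hs => ?_).symm
    rw [Measure.map_apply hπmeas (MeasurableSet.univ_pi hs)]
    have hpre : (fun (z : Nat.Primes → ℂ) (p : {x // x ∈ S}) => z p.1) ⁻¹' (Set.pi Set.univ s)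
        = {z : Nat.Primes → ℂ | ∀ p ∈ S, z p ∈
            (fun p => if h : p ∈ S then s ⟨p, h⟩ else Set.univ) p} := by
      ext z
      simp only [Set.mem_preimage, Set.mem_pi, Set.mem_univ, Set.mem_setOf_eq, true_implies]
      constructor
      · intro h p hp; rw [dif_pos hp]; exact h ⟨p, hp⟩
      · intro h p; have := h p.1 p.2; rwa [dif_pos p.2] at this
    rw [hpre, hprod S _ (fun p => by
      by_cases h : p ∈ S
      · simp only [dif_pos h]; exact hs ⟨p, h⟩
      · simp only [dif_neg h]; exact MeasurableSet.univ)]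
    rw [← Finset.prod_attach S (fun p => mAlpha α (if h : p ∈ S then s ⟨p, h⟩ else Set.univ))]
    rw [Finset.univ_eq_attach]
    refine Finset.prod_congr rfl fun p _ => ?_
    rw [dif_pos p.2, Subtype.coe_eta]
  -- integral of a product of coordinate functions
  have hcyl : ∀ g : Nat.Primes → ℂ → ℂ, (∀ p, Measurable (g p)) →
      ∫ z, ∏ p ∈ S, g p (z p) ∂να = ∏ p ∈ S, ∫ w, g p w ∂(mAlpha α) := by
    intro g hg
    have h1 : ∀ z : Nat.Primes → ℂ, ∏ p ∈ S, g p (z p) = ∏ p ∈ S.attach, g p.1 (z p.1) :=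
      fun z => (Finset.prod_attach S fun p => g p (z p)).symm
    simp_rw [h1]
    have hsm : AEStronglyMeasurable (fun y : {x // x ∈ S} → ℂ => ∏ p ∈ S.attach, g p.1 (y p))
        (Measure.map (fun (z : Nat.Primes → ℂ) (p : {x // x ∈ S}) => z p.1) να) :=
      (Finset.measurable_prod _ fun p _ => (hg p.1).comp (measurable_pi_apply p)).aestronglyMeasurable
    have h2 := integral_map (f := fun y : {x // x ∈ S} → ℂ => ∏ p ∈ S.attach, g p.1 (y p))
      hπmeas.aemeasurable hsm
    rw [← h2, hmap]
    have h3 := pi_aux (ι := {x // x ∈ S}) (mAlpha α) (fun p => g p.1)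
    rw [Finset.univ_eq_attach] at h3
    rw [h3, ← Finset.prod_attach S (fun p => ∫ w, g p w ∂(mAlpha α))]
  -- a.e. bound
  have hae : ∀ᵐ z ∂να, ∀ p ∈ S, ‖z p‖ ≤ 1 := by
    rw [eventually_all_finset]
    intro p _
    have hnull : να {z : Nat.Primes → ℂ | ¬ ‖z p‖ ≤ 1} = 0 := by
      have hB := hprod {p} (fun _ => (Metric.ball (0:ℂ) 1)ᶜ)
        (fun _ => measurableSet_ball.compl)
      have hset : {z : Nat.Primes → ℂ | ∀ q ∈ ({p} : Finset Nat.Primes), z q ∈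
          (Metric.ball (0:ℂ) 1)ᶜ} = {z : Nat.Primes → ℂ | z p ∈ (Metric.ball (0:ℂ) 1)ᶜ} := by
        ext z; simp
      rw [hset] at hB
      have hzero : mAlpha α ((Metric.ball (0:ℂ) 1)ᶜ) = 0 := by
        have hnarea : normAreaDisc ((Metric.ball (0:ℂ) 1)ᶜ) = 0 := by
          rw [normAreaDisc, Measure.smul_apply,
            Measure.restrict_apply measurableSet_ball.compl]
          simp
        exact (withDensity_absolutelyContinuous _ _) hnarea
      rw [Finset.prod_singleton, hzero] at hB
      refine measure_mono_null ?_ hB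
      intro z hz
      simp only [Set.mem_setOf_eq, Set.mem_compl_iff, Metric.mem_ball, dist_zero_right] at hz ⊢
      intro hlt; exact hz hlt.le
    exact ae_iff.mpr hnull
  -- exponents
  set e : ℕ → Nat.Primes → ℕ := fun n p => n.factorization (p:ℕ) with he
  -- measurability and integrability of monomials
  have hm_meas : ∀ m n : ℕ, Measurable (fun z : Nat.Primes → ℂ =>
      ∏ p ∈ S, (z p ^ e m p * (starRingEnd ℂ) (z p) ^ e n p)) := by
    intro m n
    apply Finset.measurable_prod
    intro p _
    exact ((measurable_pi_apply p).pow_const _).mul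
      ((Complex.continuous_conj.measurable.comp (measurable_pi_apply p)).pow_const _)
  have hbnd : ∀ m n : ℕ, ∀ z : Nat.Primes → ℂ, (∀ p ∈ S, ‖z p‖ ≤ 1) →
      ‖∏ p ∈ S, (z p ^ e m p * (starRingEnd ℂ) (z p) ^ e n p)‖ ≤ 1 := by
    intro m n z hz
    rw [norm_prod]
    refine Finset.prod_le_one (fun p _ => norm_nonneg _) (fun p hp => ?_)
    rw [norm_mul, norm_pow, norm_pow, RCLike.norm_conj]
    exact mul_le_one₀ (pow_le_one₀ (norm_nonneg _) (hz p hp))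
      (pow_nonneg (norm_nonneg _) _) (pow_le_one₀ (norm_nonneg _) (hz p hp))
  have hterm_int : ∀ (c : ℂ) (m n : ℕ), Integrable (fun z : Nat.Primes → ℂ =>
      c * ∏ p ∈ S, (z p ^ e m p * (starRingEnd ℂ) (z p) ^ e n p)) να := by
    intro c m n
    refine Integrable.mono' (integrable_const ‖c‖)
      ((measurable_const.mul (hm_meas m n)).aestronglyMeasurable) ?_
    filter_upwards [hae] with z hz
    rw [norm_mul]
    calc ‖c‖ * ‖∏ p ∈ S, (z p ^ e m p * (starRingEnd ℂ) (z p) ^ e n p)‖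
        ≤ ‖c‖ * 1 := by
          have := hbnd m n z hz
          gcongr
      _ = ‖c‖ := mul_one _
  -- pair integrals
  have hpair : ∀ m ∈ Finset.Icc 1 N, ∀ n ∈ Finset.Icc 1 N,
      ∫ z, ∏ p ∈ S, (z p ^ e m p * (starRingEnd ℂ) (z p) ^ e n p) ∂να
        = if m = n then (((numDiv n : ℝ) ^ (-α) : ℝ) : ℂ) else 0 := by
    intro m hm n hn
    rw [hcyl (fun p w => w ^ e m p * (starRingEnd ℂ) w ^ e n p)
      (fun p => (measurable_id.pow_const _).mul ((Complex.continuous_conj.measurable.comp measurable_id).pow_const _))]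
    rw [Finset.prod_congr rfl (fun p _ => moment α hα (e m p) (e n p))]
    by_cases hmn : m = n
    · subst hmn
      rw [if_pos rfl]
      have hsame : ∀ p ∈ S, (if e m p = e m p then ((((e m p : ℝ)+1) ^ (-α) : ℝ) : ℂ) else 0)
          = ((((e m p : ℝ)+1) ^ (-α) : ℝ) : ℂ) := fun p _ => if_pos rfl
      rw [Finset.prod_congr rfl hsame, ← Complex.ofReal_prod, Complex.ofReal_inj]
      rw [Real.finset_prod_rpow S _ (fun p _ => by positivity) (-α)]
      congr 1
      have hcast : ((numDiv m : ℝ)) = ∏ p ∈ S, ((e m p : ℝ) + 1) := by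
        rw [hnd m hm]
        push_cast
        rfl
      rw [hcast]
    · rw [if_neg hmn]
      obtain ⟨p0, hp0S, hp0⟩ := hdiff m hm n hn hmn
      exact Finset.prod_eq_zero hp0S (by rw [if_neg hp0])
  -- the main function
  set f : (Nat.Primes → ℂ) → ℂ :=
    fun z => ∑ n ∈ Finset.Icc 1 N, a n * ∏ p ∈ S, z p ^ e n p with hf
  have hfeq : ∀ z : Nat.Primes → ℂ,
      (∑ n ∈ Finset.Icc 1 N, a n * primeExt z n) = f z := fun z =>
    Finset.sum_congr rfl fun n hn => by rw [hPE z n hn]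
  have hexpand : ∀ z : Nat.Primes → ℂ, f z * (starRingEnd ℂ) (f z)
      = ∑ m ∈ Finset.Icc 1 N, ∑ n ∈ Finset.Icc 1 N,
          (a m * (starRingEnd ℂ) (a n)) *
            ∏ p ∈ S, (z p ^ e m p * (starRingEnd ℂ) (z p) ^ e n p) := by
    intro z
    rw [hf]
    simp only [map_sum, map_mul, map_prod, map_pow]
    rw [Finset.sum_mul_sum]
    refine Finset.sum_congr rfl fun m _ => Finset.sum_congr rfl fun n _ => ?_
    rw [Finset.prod_mul_distrib]
    ring
  have hcval : ∫ z, f z * (starRingEnd ℂ) (f z) ∂να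
      = ∑ n ∈ Finset.Icc 1 N, ((‖a n‖^2 / (numDiv n : ℝ) ^ α : ℝ) : ℂ) := by
    rw [integral_congr_ae (Filter.Eventually.of_forall hexpand)]
    rw [integral_finset_sum _ (fun m _ =>
      integrable_finset_sum _ (fun n _ => hterm_int _ m n))]
    refine Finset.sum_congr rfl fun m hm => ?_
    rw [integral_finset_sum _ (fun n _ => hterm_int _ m n)]
    have hinner : ∀ n ∈ Finset.Icc 1 N,
        ∫ z, (a m * (starRingEnd ℂ) (a n)) *
            ∏ p ∈ S, (z p ^ e m p * (starRingEnd ℂ) (z p) ^ e n p) ∂να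
          = if m = n then (a m * (starRingEnd ℂ) (a n)) * (((numDiv n : ℝ) ^ (-α) : ℝ) : ℂ)
            else 0 := by
      intro n hn
      rw [integral_const_mul, hpair m hm n hn]
      by_cases hmn : m = n
      · rw [if_pos hmn, if_pos hmn]
      · rw [if_neg hmn, if_neg hmn, mul_zero]
    rw [Finset.sum_congr rfl hinner, Finset.sum_ite_eq, if_pos hm]
    rw [Complex.mul_conj]
    rw [← Complex.ofReal_mul, Complex.ofReal_inj]
    rw [Complex.normSq_eq_norm_sq]
    rw [Real.rpow_neg (by positivity)]
    rw [div_eq_mul_inv]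
  -- conclude
  have hreal : ((∫ z, ‖f z‖^2 ∂να : ℝ) : ℂ)
      = ((∑ n ∈ Finset.Icc 1 N, ‖a n‖^2 / (numDiv n : ℝ) ^ α : ℝ) : ℂ) := by
    calc ((∫ z, ‖f z‖^2 ∂να : ℝ) : ℂ)
        = ∫ z, ((‖f z‖^2 : ℝ) : ℂ) ∂να := integral_ofReal.symm
      _ = ∫ z, f z * (starRingEnd ℂ) (f z) ∂να := by
          refine integral_congr_ae (Filter.Eventually.of_forall fun z => ?_)
          show ((‖f z‖^2 : ℝ) : ℂ) = f z * (starRingEnd ℂ) (f z)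
          rw [Complex.mul_conj, Complex.sq_norm]
      _ = ∑ n ∈ Finset.Icc 1 N, ((‖a n‖^2 / (numDiv n : ℝ) ^ α : ℝ) : ℂ) := hcval
      _ = ((∑ n ∈ Finset.Icc 1 N, ‖a n‖^2 / (numDiv n : ℝ) ^ α : ℝ) : ℂ) := by
          rw [Complex.ofReal_sum]
  have hfin := Complex.ofReal_inj.mp hreal
  calc ∫ z, ‖∑ n ∈ Finset.Icc 1 N, a n * primeExt z n‖^2 ∂να
      = ∫ z, ‖f z‖^2 ∂να := by
        refine integral_congr_ae (Filter.Eventually.of_forall fun z => ?_)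
        show ‖∑ n ∈ Finset.Icc 1 N, a n * primeExt z n‖^2 = ‖f z‖^2
        rw [hfeq z]
    _ = ∑ n ∈ Finset.Icc 1 N, ‖a n‖^2 / (numDiv n : ℝ) ^ α := hfin
end
end

section
/- Let (X, μ) be a probability space and let (e_n)_{n≥1} be an orthonormal sequence in L²(X, μ). If (c_n)_{n≥1} is a sequence of complex numbers with Σ_{n=1}^∞ |c_n|² (log n)² < ∞, then the partial sums Σ_{n=1}^N c_n e_n(x) converge as N → ∞ for μ-almost every x ∈ X. -/
open Complex Filter MeasureTheory Finset

noncomputable section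

namespace RM


def blk (a : ℕ → ℂ) (j s : ℕ) : ℂ := ∑ n ∈ Finset.Ico s (s + 2 ^ j), a n

lemma blk_shift (a : ℕ → ℂ) (m j s : ℕ) :
    blk a j (m + s) = blk (fun n => a (m + n)) j s := by
  unfold blk
  rw [Finset.sum_Ico_eq_sum_range, Finset.sum_Ico_eq_sum_range]
  have h1 : m + s + 2 ^ j - (m + s) = 2 ^ j := by simp
  have h2 : s + 2 ^ j - s = 2 ^ j := by simp
  rw [h1, h2]
  apply Finset.sum_congr rfl
  intro n _
  congr 1
  omega

lemma decomp : ∀ (K : ℕ) (t : ℕ), t < 2 ^ (K + 1) → ∀ a : ℕ → ℂ,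
    ∑ n ∈ Finset.range t, a n =
      ∑ j ∈ Finset.range (K + 1),
        (if (t / 2 ^ j) % 2 = 1 then blk a j (2 ^ (j + 1) * (t / 2 ^ (j + 1))) else 0) := by
  intro K
  induction K with
  | zero =>
    intro t ht a
    interval_cases t
    · simp [blk]
    · simp [blk]
  | succ K ih =>
    intro t ht a
    rcases lt_or_ge t (2 ^ (K + 1)) with h | h
    · rw [Finset.sum_range_succ, Nat.div_eq_of_lt h]
      norm_num
      exact ih t h a
    · obtain ⟨r, rfl⟩ : ∃ r, t = 2 ^ (K + 1) + r := ⟨t - 2 ^ (K + 1), by omega⟩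
      have hpow : (2:ℕ) ^ (K + 2) = 2 ^ (K + 1) + 2 ^ (K + 1) := by ring
      have hr : r < 2 ^ (K + 1) := by omega
      have hL : ∑ n ∈ Finset.range (2 ^ (K + 1) + r), a n
          = (∑ n ∈ Finset.range (2 ^ (K + 1)), a n) + ∑ n ∈ Finset.range r, a (2 ^ (K + 1) + n) := by
        rw [Finset.range_eq_Ico,
          ← Finset.sum_Ico_consecutive a (Nat.zero_le (2 ^ (K + 1))) (Nat.le_add_right _ r),
          ← Finset.range_eq_Ico, Finset.sum_Ico_eq_sum_range]
        simp
      rw [hL, Finset.sum_range_succ]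
      have htop : (2 ^ (K + 1) + r) / 2 ^ (K + 1) = 1 := by
        rw [add_comm, Nat.add_div_right _ (by positivity), Nat.div_eq_of_lt hr]
      have htop2 : (2 ^ (K + 1) + r) / 2 ^ (K + 1 + 1) = 0 := Nat.div_eq_of_lt (by omega)
      rw [htop, htop2]
      norm_num
      rw [add_comm (∑ n ∈ Finset.range (2 ^ (K + 1)), a n)]
      congr 1
      · rw [ih r hr (fun n => a (2 ^ (K + 1) + n))]
        apply Finset.sum_congr rfl
        intro j hj
        have hjK : j ≤ K := Nat.lt_succ_iff.mp (Finset.mem_range.mp hj)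
        have hp1 : (2:ℕ) ^ (K + 1) = 2 ^ j * (2 * 2 ^ (K - j)) := by
          rw [show 2 * 2 ^ (K - j) = 2 ^ (K - j + 1) from (pow_succ' 2 (K - j)).symm, ← pow_add]
          congr 1; omega
        have hp2 : (2:ℕ) ^ (K + 1) = 2 ^ (j + 1) * 2 ^ (K - j) := by
          rw [← pow_add]; congr 1; omega
        have e1 : (2 ^ (K + 1) + r) / 2 ^ j = 2 * 2 ^ (K - j) + r / 2 ^ j := by
          rw [hp1, Nat.mul_add_div (by positivity)]
        have e2 : (2 ^ (K + 1) + r) / 2 ^ (j + 1) = 2 ^ (K - j) + r / 2 ^ (j + 1) := by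
          rw [hp2, Nat.mul_add_div (by positivity)]
        rw [e1, e2, Nat.mul_add_mod, Nat.mul_add, ← hp2, blk_shift]
      · unfold blk
        rw [Finset.range_eq_Ico]
        norm_num

lemma sum_blocks (u : ℕ → ℝ) (j : ℕ) : ∀ M : ℕ,
    ∑ i ∈ Finset.range M, ∑ n ∈ Finset.Ico (i * 2 ^ j) (i * 2 ^ j + 2 ^ j), u n
      = ∑ n ∈ Finset.range (M * 2 ^ j), u n := by
  intro M
  induction M with
  | zero => simp
  | succ M ih =>
    rw [Finset.sum_range_succ, ih, Finset.range_eq_Ico,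
      Finset.sum_Ico_consecutive u (Nat.zero_le (M * 2 ^ j)) (Nat.le_add_right _ _), ← Finset.range_eq_Ico]
    congr 2
    ring

lemma pointwise_bound (K t : ℕ) (ht : t < 2 ^ (K + 1)) (a : ℕ → ℂ) :
    ‖∑ n ∈ Finset.range t, a n‖ ^ 2
      ≤ (K + 1 : ℝ) * ∑ j ∈ Finset.range (K + 1),
          ∑ i ∈ Finset.range (2 ^ (K + 1 - j)), ‖blk a j (i * 2 ^ j)‖ ^ 2 := by
  rw [decomp K t ht a]
  calc ‖∑ j ∈ Finset.range (K + 1),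
        (if (t / 2 ^ j) % 2 = 1 then blk a j (2 ^ (j + 1) * (t / 2 ^ (j + 1))) else 0)‖ ^ 2
      ≤ (∑ j ∈ Finset.range (K + 1),
        ‖(if (t / 2 ^ j) % 2 = 1 then blk a j (2 ^ (j + 1) * (t / 2 ^ (j + 1))) else 0)‖) ^ 2 := by
        have := norm_sum_le (Finset.range (K + 1))
          (fun j => if (t / 2 ^ j) % 2 = 1 then blk a j (2 ^ (j + 1) * (t / 2 ^ (j + 1))) else 0)
        exact pow_le_pow_left₀ (norm_nonneg _) this 2
    _ ≤ (K + 1 : ℝ) * ∑ j ∈ Finset.range (K + 1),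
        ‖(if (t / 2 ^ j) % 2 = 1 then blk a j (2 ^ (j + 1) * (t / 2 ^ (j + 1))) else 0)‖ ^ 2 := by
        have := sq_sum_le_card_mul_sum_sq (s := Finset.range (K + 1))
          (f := fun j => ‖(if (t / 2 ^ j) % 2 = 1 then blk a j (2 ^ (j + 1) * (t / 2 ^ (j + 1))) else 0)‖)
        simpa using this
    _ ≤ (K + 1 : ℝ) * ∑ j ∈ Finset.range (K + 1),
          ∑ i ∈ Finset.range (2 ^ (K + 1 - j)), ‖blk a j (i * 2 ^ j)‖ ^ 2 := by
        apply mul_le_mul_of_nonneg_left _ (by positivity)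
        apply Finset.sum_le_sum
        intro j hj
        by_cases hcond : (t / 2 ^ j) % 2 = 1
        · rw [if_pos hcond]
          have hjK : j < K + 1 := Finset.mem_range.mp hj
          set i0 : ℕ := 2 * (t / 2 ^ (j + 1)) with hi0
          have hstart : 2 ^ (j + 1) * (t / 2 ^ (j + 1)) = i0 * 2 ^ j := by
            rw [hi0, pow_succ']; ring
          have hle : i0 * 2 ^ j ≤ t := by
            rw [← hstart, mul_comm]
            exact Nat.div_mul_le_self t (2 ^ (j + 1))
          have hi0lt : i0 < 2 ^ (K + 1 - j) := by
            have h2 : (2:ℕ) ^ (K + 1) = 2 ^ (K + 1 - j) * 2 ^ j := by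
              rw [← pow_add]; congr 1; omega
            have h1 : i0 * 2 ^ j < 2 ^ (K + 1 - j) * 2 ^ j := by
              rw [← h2]; exact lt_of_le_of_lt hle ht
            exact Nat.lt_of_mul_lt_mul_right h1
          rw [hstart]
          exact Finset.single_le_sum (f := fun i => ‖blk a j (i * 2 ^ j)‖ ^ 2)
            (fun i _ => by positivity) (Finset.mem_range.mpr hi0lt)
        · rw [if_neg hcond]
          simp only [norm_zero]
          norm_num
          positivity



variable {X : Type*} [MeasurableSpace X] {μ : Measure X}

lemma memℒp_conj {f : X → ℂ} (hf : MemLp f 2 μ) :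
    MemLp (fun x => (starRingEnd ℂ) (f x)) 2 μ :=
  ⟨Complex.continuous_conj.comp_aestronglyMeasurable hf.1,
   lt_of_le_of_lt (eLpNorm_mono (fun x => by simp)) hf.2⟩

lemma integrable_mul_L2 {f g : X → ℂ} (hf : MemLp f 2 μ) (hg : MemLp g 2 μ) :
    Integrable (fun x => f x * g x) μ := by
  have h : MemLp (f • g) 1 μ := hg.smul hf
  have h2 := memLp_one_iff_integrable.mp h
  exact h2

variable [IsProbabilityMeasure μ]

lemma orth_sum (e : ℕ → X → ℂ) (he : ∀ n, MemLp (e n) 2 μ)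
    (horth : ∀ n m : ℕ,
      (∫ x, (starRingEnd ℂ) (e n x) * e m x ∂μ) = if n = m then 1 else 0)
    (c : ℕ → ℂ) (s : Finset ℕ) :
    ∫ x, ‖∑ n ∈ s, c n * e n x‖ ^ 2 ∂μ = ∑ n ∈ s, ‖c n‖ ^ 2 := by
  have hmul : ∀ n m : ℕ, Integrable (fun x => (starRingEnd ℂ) (e n x) * e m x) μ :=
    fun n m => integrable_mul_L2 (memℒp_conj (he n)) (he m)
  have expand : ∀ x, (starRingEnd ℂ) (∑ n ∈ s, c n * e n x) * (∑ n ∈ s, c n * e n x)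
      = ∑ n ∈ s, ∑ m ∈ s,
          ((starRingEnd ℂ) (c n) * c m) * ((starRingEnd ℂ) (e n x) * e m x) := by
    intro x
    rw [map_sum, Finset.sum_mul_sum]
    apply Finset.sum_congr rfl; intro n _
    apply Finset.sum_congr rfl; intro m _
    rw [map_mul]; ring
  have key : (∫ x, (starRingEnd ℂ) (∑ n ∈ s, c n * e n x) * (∑ n ∈ s, c n * e n x) ∂μ)
      = ∑ n ∈ s, ((‖c n‖ : ℂ) ^ 2) := by
    simp_rw [expand]
    rw [integral_finset_sum _ (fun n _ => integrable_finset_sum _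
      (fun m _ => ((hmul n m).const_mul _)))]
    apply Finset.sum_congr rfl; intro n hns
    rw [integral_finset_sum _ (fun m _ => (hmul n m).const_mul _)]
    have : ∀ m ∈ s, (∫ x, ((starRingEnd ℂ) (c n) * c m) * ((starRingEnd ℂ) (e n x) * e m x) ∂μ)
        = if n = m then (starRingEnd ℂ) (c n) * c m else 0 := by
      intro m _
      rw [integral_const_mul, horth n m]
      by_cases h : n = m <;> simp [h]
    rw [Finset.sum_congr rfl this, Finset.sum_ite_eq]
    rw [if_pos hns, RCLike.conj_mul]
    norm_cast
  have h1 : ∀ x, (starRingEnd ℂ) (∑ n ∈ s, c n * e n x) * (∑ n ∈ s, c n * e n x)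
      = ((‖∑ n ∈ s, c n * e n x‖ ^ 2 : ℝ) : ℂ) := by
    intro x
    rw [RCLike.conj_mul]
    norm_cast
  have h2 : (∫ x, ((‖∑ n ∈ s, c n * e n x‖ ^ 2 : ℝ) : ℂ) ∂μ) = ∑ n ∈ s, ((‖c n‖ : ℂ)) ^ 2 := by
    rw [← key]
    apply integral_congr_ae
    filter_upwards with x
    rw [h1 x]
  apply Complex.ofReal_injective
  have h4 : ((∫ x, ‖∑ n ∈ s, c n * e n x‖ ^ 2 ∂μ : ℝ) : ℂ)
      = ∫ x, ((‖∑ n ∈ s, c n * e n x‖ ^ 2 : ℝ) : ℂ) ∂μ := by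
    exact integral_ofReal.symm
  rw [h4, h2]
  push_cast
  ring



lemma summable_beta (c : ℕ → ℂ)
    (hc : Summable fun n : ℕ => ‖c n‖ ^ 2 * Real.log n ^ 2) :
    Summable (fun k : ℕ => ((k : ℝ) + 1) ^ 2 * ∑ n ∈ Finset.Ico (2 ^ k) (2 ^ (k + 1)), ‖c n‖ ^ 2) := by
  set g : ℕ → ℝ := fun n => ‖c n‖ ^ 2 * Real.log n ^ 2 with hg
  have hg0 : ∀ n, 0 ≤ g n := fun n => mul_nonneg (by positivity) (sq_nonneg _)
  set G : ℕ → ℝ := fun k => ∑ n ∈ Finset.Ico (2 ^ k) (2 ^ (k + 1)), g n with hG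
  set b : ℕ → ℝ := fun k => ∑ n ∈ Finset.Ico (2 ^ k) (2 ^ (k + 1)), ‖c n‖ ^ 2 with hb
  have hb0 : ∀ k, 0 ≤ b k := fun k => Finset.sum_nonneg fun n _ => by positivity
  have hG0 : ∀ k, 0 ≤ G k := fun k => Finset.sum_nonneg fun n _ => hg0 n
  have hGsum : ∀ K : ℕ, ∑ k ∈ Finset.range K, G k = ∑ n ∈ Finset.Ico 1 (2 ^ K), g n := by
    intro K
    induction K with
    | zero => simp
    | succ K ih =>
      rw [Finset.sum_range_succ, ih]
      exact Finset.sum_Ico_consecutive g (Nat.one_le_two_pow) (Nat.pow_le_pow_right (by norm_num) (by omega))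
  have hGle : ∀ K : ℕ, ∑ k ∈ Finset.range K, G k ≤ ∑' n, g n := by
    intro K
    rw [hGsum K]
    exact Summable.sum_le_tsum _ (fun n _ => hg0 n) hc
  set C : ℝ := 4 / Real.log 2 ^ 2 with hC
  have hlog2 : 0 < Real.log 2 := Real.log_pos (by norm_num)
  have hC0 : 0 ≤ C := by positivity
  have hterm : ∀ k : ℕ, 1 ≤ k → ((k : ℝ) + 1) ^ 2 * b k ≤ C * G k := by
    intro k hk
    rw [hb, hG, Finset.mul_sum, Finset.mul_sum]
    apply Finset.sum_le_sum
    intro n hn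
    obtain ⟨hn1, hn2⟩ := Finset.mem_Ico.mp hn
    have hn2' : (2:ℕ) ≤ n := le_trans (by
      calc (2:ℕ) = 2 ^ 1 := rfl
        _ ≤ 2 ^ k := Nat.pow_le_pow_right (by norm_num) hk) hn1
    have hlogn : (k : ℝ) * Real.log 2 ≤ Real.log n := by
      have h1 : ((2:ℝ)) ^ k ≤ (n : ℝ) := by exact_mod_cast hn1
      have := Real.log_le_log (by positivity) h1
      rwa [Real.log_pow] at this
    have hlogn0 : 0 ≤ Real.log n := le_trans (by positivity) hlogn
    have hsq : ((k:ℝ) * Real.log 2) ^ 2 ≤ Real.log n ^ 2 := by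
      apply pow_le_pow_left₀ (by positivity) hlogn
    have hk1 : ((k:ℝ) + 1) ^ 2 ≤ 4 * (k:ℝ) ^ 2 := by
      have : (1:ℝ) ≤ (k:ℝ) := by exact_mod_cast hk
      nlinarith
    have hcn : (0:ℝ) ≤ ‖c n‖ ^ 2 := by positivity
    rw [hg]
    calc ((k : ℝ) + 1) ^ 2 * ‖c n‖ ^ 2 ≤ 4 * (k:ℝ)^2 * ‖c n‖ ^ 2 :=
          mul_le_mul_of_nonneg_right hk1 hcn
      _ ≤ C * (‖c n‖ ^ 2 * Real.log n ^ 2) := by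
          rw [hC]
          have h2 : ((k:ℝ) * Real.log 2) ^ 2 = (k:ℝ)^2 * Real.log 2 ^ 2 := by ring
          have h3 : (k:ℝ)^2 * Real.log 2 ^ 2 ≤ Real.log n ^ 2 := by rw [← h2]; exact hsq
          rw [div_mul_eq_mul_div, ← sub_nonneg]
          have expand : 4 * (‖c n‖ ^ 2 * Real.log (n:ℝ) ^ 2) / Real.log 2 ^ 2
              - 4 * (k:ℝ) ^ 2 * ‖c n‖ ^ 2
              = (4 * ‖c n‖ ^ 2 / Real.log 2 ^ 2) * (Real.log n ^ 2 - (k:ℝ)^2 * Real.log 2 ^2) := by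
            field_simp
          rw [expand]
          apply mul_nonneg (by positivity)
          linarith
  apply summable_of_sum_range_le
    (c := b 0 + C * ∑' n, g n)
    (fun k => mul_nonneg (by positivity) (hb0 k))
  intro K
  match K with
  | 0 =>
    have h1 : 0 ≤ ∑' n, g n := tsum_nonneg hg0
    simp
    nlinarith [hb0 0]
  | (K + 1) =>
    rw [Finset.sum_range_succ']
    simp only [Nat.cast_zero, zero_add, one_pow, one_mul]
    have h1 : ∑ i ∈ Finset.range K, ((i : ℝ) + 1 + 1) ^ 2 * b (i + 1)
        ≤ C * ∑' n, g n := by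
      have h2 : ∀ i ∈ Finset.range K, ((i : ℝ) + 1 + 1) ^ 2 * b (i + 1) ≤ C * G (i + 1) := by
        intro i _
        have h := hterm (i + 1) (by omega)
        push_cast at h
        exact h
      calc ∑ i ∈ Finset.range K, ((i : ℝ) + 1 + 1) ^ 2 * b (i + 1)
          ≤ ∑ i ∈ Finset.range K, C * G (i + 1) := Finset.sum_le_sum h2
        _ = C * ∑ i ∈ Finset.range K, G (i + 1) := by rw [Finset.mul_sum]
        _ ≤ C * ∑ k ∈ Finset.range (K + 1), G k := by
            apply mul_le_mul_of_nonneg_left _ hC0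
            rw [Finset.sum_range_succ']
            have := hG0 0
            linarith
        _ ≤ C * ∑' n, g n := mul_le_mul_of_nonneg_left (hGle (K + 1)) hC0
    have hfin : b 0 + ∑ i ∈ Finset.range K, ((i:ℝ) + 1 + 1) ^ 2 * b (i + 1)
        ≤ b 0 + C * ∑' n, g n := by linarith
    calc ∑ i ∈ Finset.range K, (((i + 1 : ℕ) : ℝ) + 1) ^ 2 * b (i + 1) + b 0
        = b 0 + ∑ i ∈ Finset.range K, ((i : ℝ) + 1 + 1) ^ 2 * b (i + 1) := by
          rw [add_comm]
          congr 1
          apply Finset.sum_congr rfl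
          intro i _
          push_cast
          ring_nf
      _ ≤ b 0 + C * ∑' n, g n := hfin


def Bset (k j i : ℕ) : Finset ℕ :=
  ((Finset.Ico (i * 2 ^ j) (i * 2 ^ j + 2 ^ j)).filter (fun n => n < 2 ^ k)).image
    (fun n => 2 ^ k + n)

def Sf {X : Type*} (c : ℕ → ℂ) (e : ℕ → X → ℂ) (N : ℕ) (x : X) : ℂ :=
  ∑ n ∈ Finset.range N, c n * e n x

def Tf {X : Type*} (c : ℕ → ℂ) (e : ℕ → X → ℂ) (k : ℕ) (x : X) : ℝ :=
  ∑ j ∈ Finset.range (k + 1), ∑ i ∈ Finset.range (2 ^ (k + 1 - j)),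
    ‖∑ n ∈ Bset k j i, c n * e n x‖ ^ 2

lemma Tf_nonneg {X : Type*} (c : ℕ → ℂ) (e : ℕ → X → ℂ) (k : ℕ) (x : X) :
    0 ≤ Tf c e k x :=
  Finset.sum_nonneg fun _ _ => Finset.sum_nonneg fun _ _ => sq_nonneg _

lemma blk_eq {X : Type*} (c : ℕ → ℂ) (e : ℕ → X → ℂ) (x : X) (k j i : ℕ) :
    blk (fun n => if n < 2 ^ k then c (2 ^ k + n) * e (2 ^ k + n) x else 0) j (i * 2 ^ j)
      = ∑ n ∈ Bset k j i, c n * e n x := by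
  unfold blk Bset
  rw [Finset.sum_image (fun a _ b _ h => by omega), Finset.sum_filter]

lemma amgm (α y : ℝ) (hα : 0 < α) (hy : 0 ≤ y) : y ≤ (1 / α ^ 2 + α ^ 2 * y ^ 2) / 2 := by
  have h1 : α * (1 / α) = 1 := mul_one_div_cancel hα.ne'
  have h2 : (1 / α) * (α * y) = y := by field_simp
  have h3 : (1 / α) ^ 2 = 1 / α ^ 2 := by rw [div_pow, one_pow]
  nlinarith [sq_nonneg (1 / α - α * y), h2, h3]

lemma pointwise_T {X : Type*} (c : ℕ → ℂ) (e : ℕ → X → ℂ) (x : X) (k N : ℕ)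
    (h1 : 2 ^ k ≤ N) (h2 : N < 2 ^ (k + 1)) :
    ‖Sf c e N x - Sf c e (2 ^ k) x‖ ^ 2 ≤ ((k : ℝ) + 1) * Tf c e k x := by
  have hpow : (2:ℕ) ^ (k + 1) = 2 ^ k + 2 ^ k := by ring
  set a : ℕ → ℂ := fun n => if n < 2 ^ k then c (2 ^ k + n) * e (2 ^ k + n) x else 0 with ha
  have hdiff : Sf c e N x - Sf c e (2 ^ k) x = ∑ n ∈ Finset.range (N - 2 ^ k), a n := by
    unfold Sf
    have hsplit := Finset.sum_Ico_consecutive (fun n => c n * e n x) (Nat.zero_le (2 ^ k)) h1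
    rw [← Finset.range_eq_Ico, ← Finset.range_eq_Ico] at hsplit
    rw [← hsplit, add_sub_cancel_left, Finset.sum_Ico_eq_sum_range]
    apply Finset.sum_congr rfl
    intro n hn
    have hn' : n < 2 ^ k := by
      have := Finset.mem_range.mp hn
      omega
    rw [ha]
    simp only []
    rw [if_pos hn']
  have hlt : N - 2 ^ k < 2 ^ (k + 1) := by omega
  have hpb := pointwise_bound k (N - 2 ^ k) hlt a
  rw [← hdiff] at hpb
  calc ‖Sf c e N x - Sf c e (2 ^ k) x‖ ^ 2
      ≤ ((k : ℝ) + 1) * ∑ j ∈ Finset.range (k + 1), ∑ i ∈ Finset.range (2 ^ (k + 1 - j)),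
          ‖blk a j (i * 2 ^ j)‖ ^ 2 := by
        have : ((k : ℕ) + 1 : ℝ) = (k : ℝ) + 1 := by push_cast; ring
        simpa [this] using hpb
    _ = ((k : ℝ) + 1) * Tf c e k x := by
        unfold Tf
        congr 1
        apply Finset.sum_congr rfl
        intro j _
        apply Finset.sum_congr rfl
        intro i _
        rw [ha, blk_eq]

lemma integral_block {X : Type*} [MeasurableSpace X] (μ : Measure X) [IsProbabilityMeasure μ]
    (e : ℕ → X → ℂ) (he : ∀ n, MemLp (e n) 2 μ)
    (horth : ∀ n m : ℕ,
      (∫ x, (starRingEnd ℂ) (e n x) * e m x ∂μ) = if n = m then 1 else 0)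
    (c : ℕ → ℂ) (k j i : ℕ) :
    ∫ x, ‖∑ n ∈ Bset k j i, c n * e n x‖ ^ 2 ∂μ
      = ∑ n ∈ Finset.Ico (i * 2 ^ j) (i * 2 ^ j + 2 ^ j),
          (if n < 2 ^ k then ‖c (2 ^ k + n)‖ ^ 2 else 0) := by
  rw [orth_sum e he horth c]
  unfold Bset
  rw [Finset.sum_image (fun a _ b _ h => by omega), Finset.sum_filter]

lemma sum_int_blocks (c : ℕ → ℂ) (k j : ℕ) (hj : j ≤ k) :
    ∑ i ∈ Finset.range (2 ^ (k + 1 - j)), ∑ n ∈ Finset.Ico (i * 2 ^ j) (i * 2 ^ j + 2 ^ j),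
        (if n < 2 ^ k then ‖c (2 ^ k + n)‖ ^ 2 else 0)
      = ∑ n ∈ Finset.Ico (2 ^ k) (2 ^ (k + 1)), ‖c n‖ ^ 2 := by
  rw [sum_blocks]
  have hM : 2 ^ (k + 1 - j) * 2 ^ j = 2 ^ (k + 1) := by rw [← pow_add]; congr 1; omega
  rw [hM]
  have hsp := Finset.sum_Ico_consecutive (fun n => if n < 2 ^ k then ‖c (2 ^ k + n)‖ ^ 2 else 0)
    (Nat.zero_le (2 ^ k)) (Nat.pow_le_pow_right (by norm_num : 1 ≤ 2) (Nat.le_succ k))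
  rw [← Finset.range_eq_Ico, ← Finset.range_eq_Ico] at hsp
  rw [← hsp]
  have h1 : ∑ n ∈ Finset.range (2 ^ k), (if n < 2 ^ k then ‖c (2 ^ k + n)‖ ^ 2 else 0)
      = ∑ n ∈ Finset.range (2 ^ k), ‖c (2 ^ k + n)‖ ^ 2 :=
    Finset.sum_congr rfl fun n hn => if_pos (Finset.mem_range.mp hn)
  have h2 : ∑ n ∈ Finset.Ico (2 ^ k) (2 ^ (k + 1)), (if n < 2 ^ k then ‖c (2 ^ k + n)‖ ^ 2 else 0)
      = 0 :=
    Finset.sum_eq_zero fun n hn => if_neg (Nat.not_lt.mpr (Finset.mem_Ico.mp hn).1)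
  rw [h1, h2, add_zero, Finset.sum_Ico_eq_sum_range]
  have h3 : 2 ^ (k + 1) - 2 ^ k = 2 ^ k := by
    have : (2:ℕ) ^ (k + 1) = 2 ^ k + 2 ^ k := by ring
    omega
  rw [h3]

lemma integral_T {X : Type*} [MeasurableSpace X] (μ : Measure X) [IsProbabilityMeasure μ]
    (e : ℕ → X → ℂ) (he : ∀ n, MemLp (e n) 2 μ)
    (horth : ∀ n m : ℕ,
      (∫ x, (starRingEnd ℂ) (e n x) * e m x ∂μ) = if n = m then 1 else 0)
    (c : ℕ → ℂ) (k : ℕ) :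
    ∫ x, Tf c e k x ∂μ
      = ((k : ℝ) + 1) * ∑ n ∈ Finset.Ico (2 ^ k) (2 ^ (k + 1)), ‖c n‖ ^ 2 := by
  have hFmem : ∀ s : Finset ℕ, MemLp (fun x => ∑ n ∈ s, c n * e n x) 2 μ := by
    intro s
    exact memLp_finset_sum s (fun n _ => (he n).const_mul (c n))
  have hInt2 : ∀ s : Finset ℕ, Integrable (fun x => ‖∑ n ∈ s, c n * e n x‖ ^ 2) μ :=
    fun s => (memLp_two_iff_integrable_sq_norm (hFmem s).1).mp (hFmem s)
  unfold Tf
  rw [integral_finset_sum _ (fun j _ => integrable_finset_sum _ (fun i _ => hInt2 _))]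
  have hj : ∀ j ∈ Finset.range (k + 1),
      (∫ x, ∑ i ∈ Finset.range (2 ^ (k + 1 - j)), ‖∑ n ∈ Bset k j i, c n * e n x‖ ^ 2 ∂μ)
        = ∑ n ∈ Finset.Ico (2 ^ k) (2 ^ (k + 1)), ‖c n‖ ^ 2 := by
    intro j hjmem
    rw [integral_finset_sum _ (fun i _ => hInt2 _)]
    have := sum_int_blocks c k j (Nat.lt_succ_iff.mp (Finset.mem_range.mp hjmem))
    rw [← this]
    apply Finset.sum_congr rfl
    intro i _
    exact integral_block μ e he horth c k j i
  rw [Finset.sum_congr rfl hj, Finset.sum_const, Finset.card_range, nsmul_eq_mul]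
  push_cast
  ring

end RM

/-- Rademacher–Menchov: if `(e_n)` is an orthonormal sequence in `L²(X, μ)`
of a probability space and `∑ |c_n|² (log n)² < ∞`, then `∑ c_n e_n(x)` converges
`μ`-almost everywhere. -/
theorem statement8 {X : Type*} [MeasurableSpace X] (μ : Measure X) [IsProbabilityMeasure μ]
    (e : ℕ → X → ℂ) (he : ∀ n, MemLp (e n) 2 μ)
    (horth : ∀ n m : ℕ,
      (∫ x, (starRingEnd ℂ) (e n x) * e m x ∂μ) = if n = m then 1 else 0)
    (c : ℕ → ℂ) (hc : Summable fun n : ℕ => ‖c n‖ ^ 2 * Real.log n ^ 2) :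
    ∀ᵐ x ∂μ, ∃ L : ℂ,
      Tendsto (fun N : ℕ => ∑ n ∈ Finset.range N, c n * e n x) atTop (nhds L) := by
  classical
  set b : ℕ → ℝ := fun k => ∑ n ∈ Finset.Ico (2 ^ k) (2 ^ (k + 1)), ‖c n‖ ^ 2 with hbdef
  have hb0 : ∀ k : ℕ, (0:ℝ) ≤ b k :=
    fun k => Finset.sum_nonneg fun n _ => by positivity
  have hbeta : Summable (fun k : ℕ => ((k : ℝ) + 1) ^ 2 * b k) := RM.summable_beta c hc
  have hgamma : Summable (fun k : ℕ => 1 / ((k : ℝ) + 1) ^ 2) := by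
    have h0 : Summable (fun n : ℕ => 1 / (n : ℝ) ^ 2) := by
      rw [Real.summable_one_div_nat_pow]
      norm_num
    have h1 := (summable_nat_add_iff 1).mpr h0
    exact h1.congr (fun n => by push_cast; ring)
  have hFmem : ∀ s : Finset ℕ, MemLp (fun x => ∑ n ∈ s, c n * e n x) 2 μ :=
    fun s => memLp_finset_sum s (fun n _ => (he n).const_mul (c n))
  have hInt2 : ∀ s : Finset ℕ, Integrable (fun x => ‖∑ n ∈ s, c n * e n x‖ ^ 2) μ :=
    fun s => (memLp_two_iff_integrable_sq_norm (hFmem s).1).mp (hFmem s)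
  have hOS : ∀ s : Finset ℕ, ∫ x, ‖∑ n ∈ s, c n * e n x‖ ^ 2 ∂μ = ∑ n ∈ s, ‖c n‖ ^ 2 :=
    RM.orth_sum e he horth c
  -- measurability
  have hTmeas : ∀ k : ℕ, AEMeasurable (RM.Tf c e k) μ := by
    intro k
    show AEMeasurable (fun x => ∑ j ∈ Finset.range (k + 1),
      ∑ i ∈ Finset.range (2 ^ (k + 1 - j)), ‖∑ n ∈ RM.Bset k j i, c n * e n x‖ ^ 2) μ
    apply Finset.aemeasurable_fun_sum
    intro j _
    apply Finset.aemeasurable_fun_sum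
    intro i _
    exact ((hFmem (RM.Bset k j i)).1.norm.aemeasurable).pow_const 2
  have hWmeas : ∀ k : ℕ,
      AEMeasurable (fun x => ENNReal.ofReal (((k:ℝ) + 1) * RM.Tf c e k x)) μ :=
    fun k => ((hTmeas k).const_mul ((k:ℝ) + 1)).ennreal_ofReal
  have hDmeas : ∀ k : ℕ, AEMeasurable
      (fun x => ((‖∑ n ∈ Finset.Ico (2 ^ k) (2 ^ (k + 1)), c n * e n x‖₊ : NNReal) : ENNReal)) μ :=
    fun k => (hFmem _).1.aemeasurable.enorm
  have hΦmeas : ∀ k : ℕ, AEMeasurable (fun x =>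
      ENNReal.ofReal (((k:ℝ) + 1) * RM.Tf c e k x)
        + ((‖∑ n ∈ Finset.Ico (2 ^ k) (2 ^ (k + 1)), c n * e n x‖₊ : NNReal) : ENNReal)) μ :=
    fun k => (hWmeas k).add (hDmeas k)
  -- integrability of W
  have hWint : ∀ k : ℕ, Integrable (fun x => ((k:ℝ) + 1) * RM.Tf c e k x) μ := by
    intro k
    have h : Integrable (fun x => ∑ j ∈ Finset.range (k + 1),
        ∑ i ∈ Finset.range (2 ^ (k + 1 - j)), ‖∑ n ∈ RM.Bset k j i, c n * e n x‖ ^ 2) μ := by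
      apply integrable_finset_sum
      intro j _
      apply integrable_finset_sum
      intro i _
      exact hInt2 (RM.Bset k j i)
    exact h.const_mul ((k:ℝ) + 1)
  -- lintegral bounds
  have hΦbound : ∀ k : ℕ,
      (∫⁻ x, (ENNReal.ofReal (((k:ℝ) + 1) * RM.Tf c e k x)
        + ((‖∑ n ∈ Finset.Ico (2 ^ k) (2 ^ (k + 1)), c n * e n x‖₊ : NNReal) : ENNReal)) ∂μ)
      ≤ ENNReal.ofReal (((k:ℝ) + 1) ^ 2 * b k
          + (1 / ((k:ℝ) + 1) ^ 2 + ((k:ℝ) + 1) ^ 2 * b k) / 2) := by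
    intro k
    rw [lintegral_add_left' (hWmeas k)]
    have hpart1 : ∫⁻ x, ENNReal.ofReal (((k:ℝ) + 1) * RM.Tf c e k x) ∂μ
        = ENNReal.ofReal (((k:ℝ) + 1) ^ 2 * b k) := by
      rw [← ofReal_integral_eq_lintegral_ofReal (hWint k)
        (Eventually.of_forall fun x => mul_nonneg (by positivity) (RM.Tf_nonneg c e k x))]
      congr 1
      rw [integral_const_mul, RM.integral_T μ e he horth c k]
      rw [hbdef]
      ring
    have hpart2 : (∫⁻ x, ((‖∑ n ∈ Finset.Ico (2 ^ k) (2 ^ (k + 1)), c n * e n x‖₊ : NNReal) : ENNReal) ∂μ)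
        ≤ ENNReal.ofReal ((1 / ((k:ℝ) + 1) ^ 2 + ((k:ℝ) + 1) ^ 2 * b k) / 2) := by
      have hwint : Integrable (fun x => (1 / ((k:ℝ) + 1) ^ 2
          + ((k:ℝ) + 1) ^ 2 * ‖∑ n ∈ Finset.Ico (2 ^ k) (2 ^ (k + 1)), c n * e n x‖ ^ 2) / 2) μ :=
        ((integrable_const _).add ((hInt2 _).const_mul _)).div_const 2
      calc (∫⁻ x, ((‖∑ n ∈ Finset.Ico (2 ^ k) (2 ^ (k + 1)), c n * e n x‖₊ : NNReal) : ENNReal) ∂μ)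
          ≤ ∫⁻ x, ENNReal.ofReal ((1 / ((k:ℝ) + 1) ^ 2
              + ((k:ℝ) + 1) ^ 2 * ‖∑ n ∈ Finset.Ico (2 ^ k) (2 ^ (k + 1)), c n * e n x‖ ^ 2) / 2) ∂μ := by
            apply lintegral_mono
            intro x
            dsimp only
            rw [← enorm_eq_nnnorm, ← ofReal_norm]
            exact ENNReal.ofReal_le_ofReal
              (RM.amgm ((k:ℝ) + 1) ‖∑ n ∈ Finset.Ico (2 ^ k) (2 ^ (k + 1)), c n * e n x‖
                (by positivity) (norm_nonneg _))
        _ = ENNReal.ofReal (∫ x, (1 / ((k:ℝ) + 1) ^ 2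
              + ((k:ℝ) + 1) ^ 2 * ‖∑ n ∈ Finset.Ico (2 ^ k) (2 ^ (k + 1)), c n * e n x‖ ^ 2) / 2 ∂μ) :=
            (ofReal_integral_eq_lintegral_ofReal hwint
              (Eventually.of_forall fun x => by positivity)).symm
        _ = ENNReal.ofReal ((1 / ((k:ℝ) + 1) ^ 2 + ((k:ℝ) + 1) ^ 2 * b k) / 2) := by
            congr 1
            rw [integral_div, integral_add (integrable_const _) ((hInt2 _).const_mul _),
              integral_const, integral_const_mul, hOS]
            simp [measure_univ, hbdef]
    rw [hpart1]
    refine le_trans (add_le_add_right hpart2 _) ?_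
    rw [← ENNReal.ofReal_add (by positivity) (by positivity)]
  -- summability of the bound
  have hδ : Summable (fun k : ℕ => ((k:ℝ) + 1) ^ 2 * b k
      + (1 / ((k:ℝ) + 1) ^ 2 + ((k:ℝ) + 1) ^ 2 * b k) / 2) :=
    hbeta.add ((hgamma.add hbeta).div_const 2)
  have hδ0 : ∀ k : ℕ, (0:ℝ) ≤ ((k:ℝ) + 1) ^ 2 * b k
      + (1 / ((k:ℝ) + 1) ^ 2 + ((k:ℝ) + 1) ^ 2 * b k) / 2 :=
    fun k => add_nonneg (mul_nonneg (by positivity) (hb0 k))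
      (div_nonneg (add_nonneg (by positivity) (mul_nonneg (by positivity) (hb0 k))) (by norm_num))
  have htsum : (∑' k : ℕ, ∫⁻ x, (ENNReal.ofReal (((k:ℝ) + 1) * RM.Tf c e k x)
      + ((‖∑ n ∈ Finset.Ico (2 ^ k) (2 ^ (k + 1)), c n * e n x‖₊ : NNReal) : ENNReal)) ∂μ) < ⊤ :=
    calc (∑' k : ℕ, ∫⁻ x, (ENNReal.ofReal (((k:ℝ) + 1) * RM.Tf c e k x)
          + ((‖∑ n ∈ Finset.Ico (2 ^ k) (2 ^ (k + 1)), c n * e n x‖₊ : NNReal) : ENNReal)) ∂μ)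
        ≤ ∑' k : ℕ, ENNReal.ofReal (((k:ℝ) + 1) ^ 2 * b k
            + (1 / ((k:ℝ) + 1) ^ 2 + ((k:ℝ) + 1) ^ 2 * b k) / 2) :=
          ENNReal.tsum_le_tsum hΦbound
      _ = ENNReal.ofReal (∑' k : ℕ, (((k:ℝ) + 1) ^ 2 * b k
            + (1 / ((k:ℝ) + 1) ^ 2 + ((k:ℝ) + 1) ^ 2 * b k) / 2)) :=
          (ENNReal.ofReal_tsum_of_nonneg hδ0 hδ).symm
      _ < ⊤ := ENNReal.ofReal_lt_top
  have hlint : (∫⁻ x, ∑' k : ℕ, (ENNReal.ofReal (((k:ℝ) + 1) * RM.Tf c e k x)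
      + ((‖∑ n ∈ Finset.Ico (2 ^ k) (2 ^ (k + 1)), c n * e n x‖₊ : NNReal) : ENNReal)) ∂μ) < ⊤ := by
    rw [lintegral_tsum hΦmeas]
    exact htsum
  have hae : ∀ᵐ x ∂μ, (∑' k : ℕ, (ENNReal.ofReal (((k:ℝ) + 1) * RM.Tf c e k x)
      + ((‖∑ n ∈ Finset.Ico (2 ^ k) (2 ^ (k + 1)), c n * e n x‖₊ : NNReal) : ENNReal))) < ⊤ :=
    ae_lt_top' (AEMeasurable.ennreal_tsum hΦmeas) hlint.ne
  filter_upwards [hae] with x hx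
  rw [ENNReal.tsum_add] at hx
  have h1 : (∑' k : ℕ, ENNReal.ofReal (((k:ℝ) + 1) * RM.Tf c e k x)) ≠ ⊤ :=
    (lt_of_le_of_lt le_self_add hx).ne
  have h2 : (∑' k : ℕ,
      ((‖∑ n ∈ Finset.Ico (2 ^ k) (2 ^ (k + 1)), c n * e n x‖₊ : NNReal) : ENNReal)) ≠ ⊤ :=
    (lt_of_le_of_lt le_add_self hx).ne
  -- dyadic subsequence converges
  have hDsum : Summable (fun k : ℕ => ∑ n ∈ Finset.Ico (2 ^ k) (2 ^ (k + 1)), c n * e n x) :=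
    Summable.of_nnnorm (ENNReal.tsum_coe_ne_top_iff_summable.mp h2)
  obtain ⟨Ld, hLd⟩ := hDsum
  have hpartial : Tendsto (fun K : ℕ => ∑ k ∈ Finset.range K,
      ∑ n ∈ Finset.Ico (2 ^ k) (2 ^ (k + 1)), c n * e n x) atTop (nhds Ld) :=
    hLd.tendsto_sum_nat
  have hS2 : ∀ K : ℕ, ∑ n ∈ Finset.range (2 ^ K), c n * e n x
      = (∑ n ∈ Finset.range 1, c n * e n x) + ∑ k ∈ Finset.range K,
          ∑ n ∈ Finset.Ico (2 ^ k) (2 ^ (k + 1)), c n * e n x := by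
    intro K
    induction K with
    | zero => simp
    | succ K ih =>
      have hsp := Finset.sum_Ico_consecutive (fun n => c n * e n x) (Nat.zero_le (2 ^ K))
        (Nat.pow_le_pow_right (by norm_num : 1 ≤ 2) (by omega : K ≤ K + 1))
      rw [← Finset.range_eq_Ico, ← Finset.range_eq_Ico] at hsp
      rw [← hsp, ih,
        Finset.sum_range_succ (fun k => ∑ n ∈ Finset.Ico (2 ^ k) (2 ^ (k + 1)), c n * e n x) K,
        add_assoc]
  have hS2tend : Tendsto (fun K : ℕ => ∑ n ∈ Finset.range (2 ^ K), c n * e n x) atTop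
      (nhds ((∑ n ∈ Finset.range 1, c n * e n x) + Ld)) := by
    have h := hpartial.const_add (∑ n ∈ Finset.range 1, c n * e n x)
    exact h.congr (fun K => (hS2 K).symm)
  set L : ℂ := (∑ n ∈ Finset.range 1, c n * e n x) + Ld with hLdef
  -- T goes to zero
  have hT0 : Tendsto (fun k : ℕ => ((k:ℝ) + 1) * RM.Tf c e k x) atTop (nhds 0) := by
    have h3 := ENNReal.tendsto_atTop_zero_of_tsum_ne_top h1
    have h4 := (ENNReal.tendsto_toReal (by simp : (0:ENNReal) ≠ ⊤)).comp h3
    simp only [Function.comp_def, ENNReal.toReal_zero] at h4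
    apply h4.congr
    intro k
    rw [ENNReal.toReal_ofReal (mul_nonneg (by positivity) (RM.Tf_nonneg c e k x))]
  refine ⟨L, ?_⟩
  rw [tendsto_iff_norm_sub_tendsto_zero]
  have hhtend : Tendsto (fun k : ℕ => Real.sqrt (((k:ℝ) + 1) * RM.Tf c e k x)
      + ‖(∑ n ∈ Finset.range (2 ^ k), c n * e n x) - L‖) atTop (nhds 0) := by
    have hsq : Tendsto (fun k : ℕ => Real.sqrt (((k:ℝ) + 1) * RM.Tf c e k x)) atTop (nhds 0) := by
      have hcont := (Real.continuous_sqrt.tendsto 0).comp hT0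
      simpa [Function.comp_def, Real.sqrt_zero] using hcont
    have hnrm : Tendsto (fun k : ℕ => ‖(∑ n ∈ Finset.range (2 ^ k), c n * e n x) - L‖) atTop
        (nhds 0) := tendsto_iff_norm_sub_tendsto_zero.mp hS2tend
    simpa using hsq.add hnrm
  have hlog : Tendsto (fun N : ℕ => Nat.log 2 N) atTop atTop := by
    apply tendsto_atTop_atTop.mpr
    intro m
    refine ⟨2 ^ m, fun N hN => ?_⟩
    calc m = Nat.log 2 (2 ^ m) := (Nat.log_pow (by norm_num) m).symm
      _ ≤ Nat.log 2 N := Nat.log_mono_right hN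
  have hcomp : Tendsto (fun N : ℕ => Real.sqrt (((Nat.log 2 N : ℝ) + 1)
      * RM.Tf c e (Nat.log 2 N) x)
      + ‖(∑ n ∈ Finset.range (2 ^ Nat.log 2 N), c n * e n x) - L‖) atTop (nhds 0) := by
    have h := hhtend.comp hlog
    simpa [Function.comp_def] using h
  apply squeeze_zero' (Eventually.of_forall fun N => norm_nonneg _) ?_ hcomp
  filter_upwards [eventually_ge_atTop 1] with N hN
  have hk1 : 2 ^ Nat.log 2 N ≤ N := Nat.pow_log_le_self 2 (by omega)
  have hk2 : N < 2 ^ (Nat.log 2 N + 1) := Nat.lt_pow_succ_log_self (by norm_num) N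
  have htri : ‖(∑ n ∈ Finset.range N, c n * e n x) - L‖
      ≤ ‖(∑ n ∈ Finset.range N, c n * e n x) - (∑ n ∈ Finset.range (2 ^ Nat.log 2 N), c n * e n x)‖
        + ‖(∑ n ∈ Finset.range (2 ^ Nat.log 2 N), c n * e n x) - L‖ := by
    have := dist_triangle (∑ n ∈ Finset.range N, c n * e n x)
      (∑ n ∈ Finset.range (2 ^ Nat.log 2 N), c n * e n x) L
    simpa [dist_eq_norm] using this
  have hsqb : ‖(∑ n ∈ Finset.range N, c n * e n x)
      - (∑ n ∈ Finset.range (2 ^ Nat.log 2 N), c n * e n x)‖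
      ≤ Real.sqrt (((Nat.log 2 N : ℝ) + 1) * RM.Tf c e (Nat.log 2 N) x) := by
    have hpt := RM.pointwise_T c e x (Nat.log 2 N) N hk1 hk2
    have hpt' : ‖(∑ n ∈ Finset.range N, c n * e n x)
        - (∑ n ∈ Finset.range (2 ^ Nat.log 2 N), c n * e n x)‖ ^ 2
        ≤ ((Nat.log 2 N : ℝ) + 1) * RM.Tf c e (Nat.log 2 N) x := hpt
    have h5 := Real.sqrt_le_sqrt hpt'
    rwa [Real.sqrt_sq (norm_nonneg _)] at h5
  exact le_trans htri (add_le_add_left hsqb _)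
end
end

section
/- There exists a constant C > 0 such that for every τ ∈ ℝ and every Dirichlet polynomial f, ∫_τ^{τ+1} |f(1/2 + it)| dt ≤ C · ‖f‖_𝒦. -/
open Complex Filter MeasureTheory Finset

noncomputable section

namespace Helper18

open ComplexConjugate Real

lemma key_ineq (x : ℝ) (hx : 1 ≤ x) :
    (x + 1) ^ (-(3/2) : ℝ) ≤ 2 * (x ^ (-(1/2) : ℝ) - (x + 1) ^ (-(1/2) : ℝ)) := by
  have hx0 : (0:ℝ) < x := by linarith
  have hx1 : (0:ℝ) < x + 1 := by linarith
  have hs := Real.sqrt_pos.mpr hx0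
  have ht := Real.sqrt_pos.mpr hx1
  have hst : Real.sqrt x ≤ Real.sqrt (x+1) := Real.sqrt_le_sqrt (by linarith)
  have hs2 : Real.sqrt x ^ 2 = x := Real.sq_sqrt hx0.le
  have ht2 : Real.sqrt (x+1) ^ 2 = x + 1 := Real.sq_sqrt hx1.le
  have h1 : x ^ (-(1/2) : ℝ) = (Real.sqrt x)⁻¹ := by
    rw [Real.rpow_neg hx0.le, ← Real.sqrt_eq_rpow]
  have h2 : (x+1) ^ (-(1/2) : ℝ) = (Real.sqrt (x+1))⁻¹ := by
    rw [Real.rpow_neg hx1.le, ← Real.sqrt_eq_rpow]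
  have h3 : (x+1) ^ (-(3/2) : ℝ) = ((x+1) * Real.sqrt (x+1))⁻¹ := by
    rw [Real.rpow_neg hx1.le]
    congr 1
    rw [show (3/2 : ℝ) = 1 + 1/2 by norm_num, Real.rpow_add hx1, Real.rpow_one,
       ← Real.sqrt_eq_rpow]
  rw [h1, h2, h3]
  set s := Real.sqrt x
  set t := Real.sqrt (x+1)
  have key : t^2 - s^2 = 1 := by rw [hs2, ht2]; ring
  have h4 : s⁻¹ - t⁻¹ = (t - s) * (s*t)⁻¹ := by field_simp
  rw [h4]
  have e : 2*((t-s)*(s*t)⁻¹) = (2*(t-s))/(s*t) := by rw [div_eq_mul_inv]; ring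
  have e2 : ((x+1)*t)⁻¹ = 1/((x+1)*t) := (inv_eq_one_div _)
  rw [e2, e, div_le_div_iff₀ (by positivity) (by positivity)]
  have hx1t : x+1 = t^2 := ht2.symm
  rw [hx1t]
  have h5 : (t-s)*(t+s) = 1 := by nlinarith [key]
  have h6 : (0:ℝ) < t + s := by positivity
  have h8 : s*t*(t+s) ≤ 2*(t^2*t) := by nlinarith [mul_pos hs ht, mul_le_mul_of_nonneg_right hst (le_of_lt (mul_pos ht ht)), mul_le_mul_of_nonneg_right (mul_le_mul_of_nonneg_right hst hs.le) ht.le]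
  have h10 : (2*(t-s)*(t^2*t)) * (t+s) = 2*(t^2*t) := by linear_combination (2*(t^2*t)) * h5
  have h11 : (2*(t-s)*(t^2*t) - s*t)*(t+s) = 2*(t^2*t) - s*t*(t+s) := by linear_combination h10
  have h9 : 0 ≤ (2*(t-s)*(t^2*t) - s*t)*(t+s) := by rw [h11]; linarith
  have h12 : 0 ≤ 2*(t-s)*(t^2*t) - s*t := (mul_nonneg_iff_of_pos_right h6).mp h9
  linarith

lemma tele' (m : ℕ) (hm : 1 ≤ m) : ∀ M, m ≤ M →
    ∑ n ∈ Finset.Icc m M, (n : ℝ) ^ (-(3/2) : ℝ)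
      ≤ (m:ℝ) ^ (-(3/2):ℝ) + 2*(m:ℝ) ^ (-(1/2):ℝ) - 2*(M:ℝ) ^ (-(1/2):ℝ) := by
  intro M
  induction M with
  | zero => intro hM; omega
  | succ M ih =>
    intro hM
    rcases Nat.lt_or_ge M m with hlt | hge
    · have hMm : M + 1 = m := by omega
      subst hMm
      simp only [Finset.Icc_self, Finset.sum_singleton]
      linarith
    · have hkey := key_ineq (M:ℝ) (by exact_mod_cast le_trans hm hge)
      rw [Finset.sum_Icc_succ_top (by omega)]
      have ihh := ih hge
      push_cast
      push_cast at ihh hkey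
      linarith

lemma tele (m : ℕ) (hm : 1 ≤ m) (M : ℕ) :
    ∑ n ∈ Finset.Icc m M, (n : ℝ) ^ (-(3/2) : ℝ) ≤ 3 * (m : ℝ) ^ (-(1/2) : ℝ) := by
  rcases Nat.lt_or_ge M m with hlt | hge
  · rw [Finset.Icc_eq_empty (by omega), Finset.sum_empty]
    positivity
  · have h1 := tele' m hm M hge
    have hm1 : (1:ℝ) ≤ (m:ℝ) := by exact_mod_cast hm
    have h2 : (m:ℝ) ^ (-(3/2):ℝ) ≤ (m:ℝ) ^ (-(1/2):ℝ) :=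
      Real.rpow_le_rpow_of_exponent_le hm1 (by norm_num)
    have h3 : (0:ℝ) ≤ (M:ℝ) ^ (-(1/2):ℝ) := by positivity
    linarith

lemma row (σ : ℝ) (hσ : 1/2 ≤ σ) (m : ℕ) (hm : 1 ≤ m) (M : ℕ) :
    ∑ n ∈ Finset.Icc 1 M,
      Real.exp (-σ * (Real.log m + Real.log n) - (Real.log m - Real.log n)^2/4) ≤ 12 := by
  have hm0 : (0:ℝ) < m := by exact_mod_cast hm
  have hm1 : (1:ℝ) ≤ (m:ℝ) := by exact_mod_cast hm
  have hLm : 0 ≤ Real.log m := Real.log_nonneg hm1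
  have hterm : ∀ n ∈ Finset.Icc 1 M,
      Real.exp (-σ * (Real.log m + Real.log n) - (Real.log m - Real.log n)^2/4)
      ≤ 3 * (if n ≤ m then (m:ℝ) ^ (-(3/2):ℝ) * (n:ℝ) ^ ((1/2):ℝ)
             else (m:ℝ) ^ ((1/2):ℝ) * (n:ℝ) ^ (-(3/2):ℝ)) := by
    intro n hn
    obtain ⟨hn1, hnM⟩ := Finset.mem_Icc.mp hn
    have hn0 : (0:ℝ) < n := by exact_mod_cast hn1
    have hn1' : (1:ℝ) ≤ (n:ℝ) := by exact_mod_cast hn1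
    have hLn : 0 ≤ Real.log n := Real.log_nonneg hn1'
    set Lm := Real.log m
    set Ln := Real.log n
    have hexp3 : Real.exp 1 ≤ 3 := by
      have := Real.exp_one_lt_d9; linarith
    have e1 : -σ * (Lm + Ln) - (Lm - Ln)^2/4 ≤ 1 + (-(Lm+Ln)/2 - |Lm - Ln|) := by
      have h5 : -σ * (Lm+Ln) ≤ -(Lm+Ln)/2 := by nlinarith
      have h6 : -(Lm-Ln)^2/4 ≤ 1 - |Lm - Ln| := by
        rcases abs_cases (Lm - Ln) with ⟨he, _⟩ | ⟨he, _⟩ <;> nlinarith [sq_nonneg (|Lm-Ln| - 2)]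
      linarith
    rcases le_or_gt n m with hc | hc
    · have hLnm : Ln ≤ Lm := Real.log_le_log hn0 (by exact_mod_cast hc)
      have habs : |Lm - Ln| = Lm - Ln := abs_of_nonneg (by linarith)
      rw [if_pos hc]
      rw [habs] at e1
      calc Real.exp (-σ * (Lm + Ln) - (Lm - Ln)^2/4)
          ≤ Real.exp (1 + (-(Lm+Ln)/2 - (Lm - Ln))) := Real.exp_le_exp.mpr e1
        _ = Real.exp 1 * ((m:ℝ) ^ (-(3/2):ℝ) * (n:ℝ) ^ ((1/2):ℝ)) := by
            rw [Real.rpow_def_of_pos hm0, Real.rpow_def_of_pos hn0, ← Real.exp_add, ← Real.exp_add]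
            congr 1
            ring
        _ ≤ 3 * ((m:ℝ) ^ (-(3/2):ℝ) * (n:ℝ) ^ ((1/2):ℝ)) := by
            have hpos : (0:ℝ) ≤ (m:ℝ) ^ (-(3/2):ℝ) * (n:ℝ) ^ ((1/2):ℝ) := by positivity
            exact mul_le_mul_of_nonneg_right hexp3 hpos
    · have hLnm : Lm ≤ Ln := Real.log_le_log hm0 (by exact_mod_cast hc.le)
      have habs : |Lm - Ln| = Ln - Lm := by
        rw [abs_of_nonpos (by linarith)]; ring
      rw [if_neg (by omega)]
      rw [habs] at e1
      calc Real.exp (-σ * (Lm + Ln) - (Lm - Ln)^2/4)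
          ≤ Real.exp (1 + (-(Lm+Ln)/2 - (Ln - Lm))) := Real.exp_le_exp.mpr e1
        _ = Real.exp 1 * ((m:ℝ) ^ ((1/2):ℝ) * (n:ℝ) ^ (-(3/2):ℝ)) := by
            rw [Real.rpow_def_of_pos hm0, Real.rpow_def_of_pos hn0, ← Real.exp_add, ← Real.exp_add]
            congr 1
            ring
        _ ≤ 3 * ((m:ℝ) ^ ((1/2):ℝ) * (n:ℝ) ^ (-(3/2):ℝ)) := by
            have hpos : (0:ℝ) ≤ (m:ℝ) ^ ((1/2):ℝ) * (n:ℝ) ^ (-(3/2):ℝ) := by positivity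
            exact mul_le_mul_of_nonneg_right hexp3 hpos
  calc ∑ n ∈ Finset.Icc 1 M, Real.exp (-σ * (Real.log m + Real.log n) - (Real.log m - Real.log n)^2/4)
      ≤ ∑ n ∈ Finset.Icc 1 M, 3 * (if n ≤ m then (m:ℝ) ^ (-(3/2):ℝ) * (n:ℝ) ^ ((1/2):ℝ)
             else (m:ℝ) ^ ((1/2):ℝ) * (n:ℝ) ^ (-(3/2):ℝ)) := Finset.sum_le_sum hterm
    _ = 3 * ∑ n ∈ Finset.Icc 1 M, (if n ≤ m then (m:ℝ) ^ (-(3/2):ℝ) * (n:ℝ) ^ ((1/2):ℝ)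
             else (m:ℝ) ^ ((1/2):ℝ) * (n:ℝ) ^ (-(3/2):ℝ)) := by rw [Finset.mul_sum]
    _ ≤ 3 * 4 := by
        rw [Finset.sum_ite]
        have hp1 : ∑ n ∈ Finset.filter (fun n => n ≤ m) (Finset.Icc 1 M),
            (m:ℝ) ^ (-(3/2):ℝ) * (n:ℝ) ^ ((1/2):ℝ) ≤ 1 := by
          calc ∑ n ∈ Finset.filter (fun n => n ≤ m) (Finset.Icc 1 M),
              (m:ℝ) ^ (-(3/2):ℝ) * (n:ℝ) ^ ((1/2):ℝ)
              ≤ ∑ n ∈ Finset.Icc 1 m, (m:ℝ) ^ (-(3/2):ℝ) * (n:ℝ) ^ ((1/2):ℝ) := by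
                apply Finset.sum_le_sum_of_subset_of_nonneg
                · intro n hn
                  simp only [Finset.mem_filter, Finset.mem_Icc] at hn ⊢
                  omega
                · intros; positivity
            _ ≤ ∑ n ∈ Finset.Icc 1 m, (m:ℝ) ^ (-(3/2):ℝ) * (m:ℝ) ^ ((1/2):ℝ) := by
                apply Finset.sum_le_sum
                intro n hn
                obtain ⟨h1, h2⟩ := Finset.mem_Icc.mp hn
                have : (n:ℝ) ^ ((1/2):ℝ) ≤ (m:ℝ) ^ ((1/2):ℝ) :=
                  Real.rpow_le_rpow (by positivity) (by exact_mod_cast h2) (by norm_num)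
                have hp : (0:ℝ) ≤ (m:ℝ) ^ (-(3/2):ℝ) := by positivity
                exact mul_le_mul_of_nonneg_left this hp
            _ = m * ((m:ℝ) ^ (-(3/2):ℝ) * (m:ℝ) ^ ((1/2):ℝ)) := by
                rw [Finset.sum_const, Nat.card_Icc]
                simp [nsmul_eq_mul]
            _ = (m:ℝ) ^ ((1:ℝ) + (-(3/2):ℝ) + ((1/2):ℝ)) := by
                rw [Real.rpow_add hm0, Real.rpow_add hm0, Real.rpow_one]
                ring
            _ = 1 := by norm_num
        have hp2 : ∑ n ∈ Finset.filter (fun n => ¬ n ≤ m) (Finset.Icc 1 M),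
            (m:ℝ) ^ ((1/2):ℝ) * (n:ℝ) ^ (-(3/2):ℝ) ≤ 3 := by
          calc ∑ n ∈ Finset.filter (fun n => ¬ n ≤ m) (Finset.Icc 1 M),
              (m:ℝ) ^ ((1/2):ℝ) * (n:ℝ) ^ (-(3/2):ℝ)
              ≤ ∑ n ∈ Finset.Icc m M, (m:ℝ) ^ ((1/2):ℝ) * (n:ℝ) ^ (-(3/2):ℝ) := by
                apply Finset.sum_le_sum_of_subset_of_nonneg
                · intro n hn
                  simp only [Finset.mem_filter, Finset.mem_Icc] at hn ⊢
                  omega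
                · intros; positivity
            _ = (m:ℝ) ^ ((1/2):ℝ) * ∑ n ∈ Finset.Icc m M, (n:ℝ) ^ (-(3/2):ℝ) := by
                rw [Finset.mul_sum]
            _ ≤ (m:ℝ) ^ ((1/2):ℝ) * (3 * (m:ℝ) ^ (-(1/2):ℝ)) := by
                apply mul_le_mul_of_nonneg_left (tele m hm M) (by positivity)
            _ = 3 * (m:ℝ) ^ (((1/2):ℝ) + (-(1/2):ℝ)) := by
                rw [Real.rpow_add hm0]; ring
            _ = 3 := by norm_num
        linarith
    _ = 12 := by norm_num

lemma norm_bexp (b : ℂ) (σ t L : ℝ) :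
    ‖b * Complex.exp (-((σ:ℂ) + t*I) * L)‖ = ‖b‖ * Real.exp (-(σ*L)) := by
  rw [norm_mul]
  congr 1
  have h : -((σ:ℂ) + t*I) * L = ((-(σ*L) : ℝ) : ℂ) + ((-(t*L) : ℝ) : ℂ)*I := by
    push_cast; ring
  rw [h, Complex.norm_exp]
  congr 1
  simp

lemma cpow_eq (n : ℕ) (hn : 1 ≤ n) (s : ℂ) :
    (n:ℂ) ^ (-s) = Complex.exp (-s * Real.log n) := by
  have hn0 : (0:ℝ) < (n:ℝ) := by exact_mod_cast hn
  have hne : (n:ℂ) ≠ 0 := by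
    simp only [ne_eq, Nat.cast_eq_zero]; omega
  rw [Complex.cpow_def_of_ne_zero hne]
  congr 1
  have hlog : Complex.log (n:ℂ) = ((Real.log n : ℝ) : ℂ) := by
    rw [show ((n:ℕ):ℂ) = (((n:ℝ)):ℂ) from by push_cast; rfl, Complex.ofReal_log hn0.le]
  rw [hlog]
  ring

lemma norm_term (f : ℕ → ℂ) (s : ℂ) (n : ℕ) :
    ‖LSeries.term f s n‖ = if n = 0 then 0 else ‖f n‖ * (n:ℝ) ^ (-s.re) := by
  rcases eq_or_ne n 0 with rfl | h0
  · simp [LSeries.term]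
  · rw [LSeries.term_of_ne_zero h0, if_neg h0, norm_div]
    have hn0 : (0:ℝ) < (n:ℝ) := by
      have := Nat.pos_of_ne_zero h0; exact_mod_cast this
    have : ‖(n:ℂ) ^ s‖ = (n:ℝ) ^ s.re := by
      rw [show ((n:ℕ):ℂ) = (((n:ℝ)):ℂ) from by push_cast; rfl,
        Complex.norm_cpow_eq_rpow_re_of_pos hn0]
    rw [this, Real.rpow_neg hn0.le, div_eq_mul_inv]

lemma sumNorm (f : ℕ → ℂ) (hf : Summable fun n : ℕ => ‖f (n+1)‖^2) (s : ℂ)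
    (hs : 1/2 < s.re) : Summable fun n => ‖LSeries.term f s n‖ := by
  have hf2 : Summable fun n : ℕ => ‖f n‖^2 := (summable_nat_add_iff 1).mp hf
  have hrp : Summable fun n : ℕ => ((n:ℝ) ^ (-s.re))^2 := by
    have h1 : ∀ n : ℕ, ((n:ℝ) ^ (-s.re))^2 = (n:ℝ) ^ (-(2*s.re)) := by
      intro n
      rw [← Real.rpow_natCast ((n:ℝ) ^ (-s.re)) 2, ← Real.rpow_mul (Nat.cast_nonneg n)]
      norm_num
      ring_nf
    simp only [h1]
    exact Real.summable_nat_rpow.mpr (by linarith)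
  refine Summable.of_nonneg_of_le (fun n => norm_nonneg _) (fun n => ?_)
    ((hf2.add hrp).div_const 2)
  rw [norm_term]
  rcases eq_or_ne n 0 with rfl | h0
  · simp only [if_pos rfl]
    positivity
  · rw [if_neg h0]
    nlinarith [sq_nonneg (‖f n‖ - (n:ℝ) ^ (-s.re))]

/-- Dirichlet polynomial evaluated via exponentials. -/
def Psum (f : ℕ → ℂ) (M : ℕ) (s : ℂ) : ℂ :=
  ∑ n ∈ Finset.Icc 1 M, f n * Complex.exp (-s * Real.log n)

lemma contPsum (f : ℕ → ℂ) (M : ℕ) (σ : ℝ) :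
    Continuous fun t : ℝ => Psum f M ((σ:ℂ) + t*I) := by
  apply continuous_finset_sum
  intro n _
  apply Continuous.mul continuous_const
  apply Complex.continuous_exp.comp
  apply Continuous.mul _ continuous_const
  apply Continuous.neg
  exact continuous_const.add (Complex.continuous_ofReal.mul continuous_const)

lemma lemP (f : ℕ → ℂ) (s : ℂ) (M : ℕ) :
    Psum f M s = ∑ n ∈ Finset.range (M+1), LSeries.term f s n := by
  have hset : Finset.range (M+1) = insert 0 (Finset.Icc 1 M) := by
    ext k
    simp only [Finset.mem_range, Finset.mem_insert, Finset.mem_Icc]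
    omega
  rw [hset, Finset.sum_insert (by simp), LSeries.term_zero, zero_add, Psum]
  apply Finset.sum_congr rfl
  intro n hn
  have hn1 : 1 ≤ n := (Finset.mem_Icc.mp hn).1
  rw [LSeries.term_of_ne_zero (by omega), ← cpow_eq n hn1 s, Complex.cpow_neg, div_eq_mul_inv]

lemma trunc (f : ℕ → ℂ) (s : ℂ) (hns : Summable fun n => ‖LSeries.term f s n‖) (M : ℕ) :
    ‖LSeries f s - Psum f M s‖ ≤ ∑' n : ℕ, ‖LSeries.term f s (n + (M+1))‖ := by
  have hsum : Summable (LSeries.term f s) := hns.of_norm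
  have hkey := hsum.sum_add_tsum_nat_add (M+1)
  have h1 : LSeries f s - Psum f M s = ∑' n : ℕ, LSeries.term f s (n + (M+1)) := by
    have hLS : LSeries f s = ∑' n : ℕ, LSeries.term f s n := rfl
    rw [hLS, lemP, ← hkey]
    ring
  rw [h1]
  have hsb : Summable fun n : ℕ => ‖LSeries.term f s (n + (M+1))‖ :=
    (summable_nat_add_iff (f := fun n => ‖LSeries.term f s n‖) (M+1)).mpr hns
  exact norm_tsum_le_tsum_norm hsb

lemma bndP (f : ℕ → ℂ) (s : ℂ) (hns : Summable fun n => ‖LSeries.term f s n‖) (M : ℕ) :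
    ‖Psum f M s‖ ≤ ∑' n : ℕ, ‖LSeries.term f s n‖ := by
  rw [lemP]
  refine (norm_sum_le _ _).trans ?_
  exact hns.sum_le_tsum _ (fun n _ => norm_nonneg _)

lemma partial_le (f : ℕ → ℂ) (hf : Summable fun n : ℕ => ‖f (n+1)‖^2) (M : ℕ) :
    ∑ n ∈ Finset.Icc 1 M, ‖f n‖^2 ≤ ∑' n : ℕ, ‖f (n+1)‖^2 := by
  have h1 : ∑ n ∈ Finset.Icc 1 M, ‖f n‖^2 = ∑ k ∈ Finset.range M, ‖f (k+1)‖^2 := by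
    induction M with
    | zero => simp
    | succ M ih => rw [Finset.sum_Icc_succ_top (by omega), Finset.sum_range_succ, ih]
  rw [h1]
  exact hf.sum_le_tsum _ (fun n _ => sq_nonneg _)

lemma entry (bm bn : ℂ) (σ c Lm Ln : ℝ) :
    Integrable (fun t : ℝ => ((Real.exp (-(t-c)^2) : ℝ) : ℂ) *
      ((bm * Complex.exp (-((σ:ℂ) + t*I) * Lm)) * (starRingEnd ℂ) (bn * Complex.exp (-((σ:ℂ) + t*I) * Ln)))) ∧
    ‖∫ t : ℝ, ((Real.exp (-(t-c)^2) : ℝ) : ℂ) *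
      ((bm * Complex.exp (-((σ:ℂ) + t*I) * Lm)) * (starRingEnd ℂ) (bn * Complex.exp (-((σ:ℂ) + t*I) * Ln)))‖
      ≤ ‖bm‖ * ‖bn‖ * 2 * Real.exp (-σ * (Lm + Ln) - (Lm - Ln)^2/4) := by
  set c' : ℂ := 2*(c:ℂ) - ((Lm:ℂ) - (Ln:ℂ))*I with hc'
  set d : ℂ := -((c:ℂ)^2) - (σ:ℂ)*((Lm:ℂ)+(Ln:ℂ)) with hd
  have hconj : ∀ t : ℝ, (starRingEnd ℂ) (bn * Complex.exp (-((σ:ℂ) + t*I) * Ln))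
      = (starRingEnd ℂ) bn * Complex.exp (-((σ:ℂ) - t*I) * Ln) := by
    intro t
    rw [map_mul, ← Complex.exp_conj]
    congr 2
    simp only [map_mul, map_neg, map_add, Complex.conj_ofReal, Complex.conj_I]
    ring
  have hfun : (fun t : ℝ => ((Real.exp (-(t-c)^2) : ℝ) : ℂ) *
      ((bm * Complex.exp (-((σ:ℂ) + t*I) * Lm)) * (starRingEnd ℂ) (bn * Complex.exp (-((σ:ℂ) + t*I) * Ln))))
      = fun t : ℝ => (bm * (starRingEnd ℂ) bn) * Complex.exp ((-1:ℂ) * (t:ℂ)^2 + c' * (t:ℂ) + d) := by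
    funext t
    rw [hconj t]
    have h1 : ((Real.exp (-(t-c)^2) : ℝ) : ℂ) = Complex.exp (((-(t-c)^2 : ℝ)) : ℂ) := by
      rw [Complex.ofReal_exp]
    have h2 : (-1:ℂ) * (t:ℂ)^2 + c' * (t:ℂ) + d
        = (((-(t-c)^2 : ℝ)) : ℂ) + (-((σ:ℂ) + t*I) * Lm) + (-((σ:ℂ) - t*I) * Ln) := by
      rw [hc', hd]
      push_cast
      ring
    rw [h1, h2, Complex.exp_add, Complex.exp_add]
    ring
  constructor
  · rw [hfun]
    exact (integrable_cexp_quadratic' (by norm_num) c' d).const_mul _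
  · rw [hfun]
    rw [MeasureTheory.integral_const_mul, integral_cexp_quadratic (by norm_num : (-1:ℂ).re < 0) c' d]
    rw [norm_mul, norm_mul, norm_mul, RCLike.norm_conj]
    have h1 : ((Real.pi : ℂ) / -(-1:ℂ)) = ((Real.pi : ℝ) : ℂ) := by norm_num
    have h2 : ‖((Real.pi:ℝ):ℂ) ^ (1/2 : ℂ)‖ ≤ 2 := by
      rw [Complex.norm_cpow_eq_rpow_re_of_pos Real.pi_pos]
      have : ((1/2 : ℂ)).re = (1/2 : ℝ) := by norm_num
      rw [this, ← Real.sqrt_eq_rpow]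
      calc Real.sqrt Real.pi ≤ Real.sqrt 4 := Real.sqrt_le_sqrt Real.pi_le_four
        _ = 2 := by
          rw [show (4:ℝ) = 2^2 by norm_num, Real.sqrt_sq (by norm_num : (0:ℝ) ≤ 2)]
    have h3 : ‖Complex.exp (d - c'^2/(4*(-1:ℂ)))‖ = Real.exp (-σ*(Lm+Ln) - (Lm-Ln)^2/4) := by
      have hz : d - c'^2/(4*(-1:ℂ))
          = (((-σ*(Lm+Ln) - (Lm-Ln)^2/4 : ℝ)) : ℂ) + (((-(c*(Lm - Ln)) : ℝ)) : ℂ)*I := by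
        rw [hc', hd]
        push_cast
        linear_combination ((Lm:ℂ)^2/4 + (Ln:ℂ)^2/4 - (Lm:ℂ)*(Ln:ℂ)/2) * Complex.I_sq
      rw [hz, Complex.norm_exp]
      congr 1
      simp only [Complex.add_re, Complex.ofReal_re, Complex.mul_re, Complex.I_re, Complex.I_im,
        Complex.ofReal_im]
      norm_cast
      push_cast
      ring
    rw [h1, h3]
    have hE : (0:ℝ) ≤ Real.exp (-σ*(Lm+Ln) - (Lm-Ln)^2/4) := (Real.exp_pos _).le
    have hb : (0:ℝ) ≤ ‖bm‖ * ‖bn‖ := by positivity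
    calc ‖bm‖ * ‖bn‖ * (‖((Real.pi:ℝ):ℂ) ^ (1/2:ℂ)‖ * Real.exp (-σ*(Lm+Ln) - (Lm-Ln)^2/4))
        ≤ ‖bm‖ * ‖bn‖ * (2 * Real.exp (-σ*(Lm+Ln) - (Lm-Ln)^2/4)) := by
          apply mul_le_mul_of_nonneg_left _ hb
          exact mul_le_mul_of_nonneg_right h2 hE
      _ = ‖bm‖ * ‖bn‖ * 2 * Real.exp (-σ*(Lm+Ln) - (Lm-Ln)^2/4) := by ring

lemma csInt (u v : ℝ → ℝ) (p q : ℝ) (hpq : p ≤ q) (hu : Continuous u) (hv : Continuous v)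
    (hu0 : ∀ t, 0 ≤ u t) (hv0 : ∀ t, 0 ≤ v t) :
    ∫ t in p..q, u t * v t ≤
      Real.sqrt (∫ t in p..q, (u t)^2) * Real.sqrt (∫ t in p..q, (v t)^2) := by
  set A := ∫ t in p..q, (u t)^2 with hA
  set Cq := ∫ t in p..q, (v t)^2 with hC
  set B := ∫ t in p..q, u t * v t with hB
  have hA0 : 0 ≤ A := intervalIntegral.integral_nonneg hpq (fun t _ => sq_nonneg _)
  have hC0 : 0 ≤ Cq := intervalIntegral.integral_nonneg hpq (fun t _ => sq_nonneg _)
  have hB0 : 0 ≤ B := intervalIntegral.integral_nonneg hpq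
    (fun t _ => mul_nonneg (hu0 t) (hv0 t))
  have key : ∀ x : ℝ, 0 ≤ x^2 * A - 2*x*B + Cq := by
    intro x
    have h0 : (0:ℝ) ≤ ∫ t in p..q, (x * u t - v t)^2 :=
      intervalIntegral.integral_nonneg hpq (fun t _ => sq_nonneg _)
    have hexp : (∫ t in p..q, (x * u t - v t)^2) = x^2 * A - 2*x*B + Cq := by
      have hfe : (fun t => (x * u t - v t)^2)
          = fun t => x^2 * (u t)^2 - (2*x) * (u t * v t) + (v t)^2 := by
        funext t; ring
      rw [hfe]
      rw [intervalIntegral.integral_add (f := fun t => x^2 * (u t)^2 - (2*x) * (u t * v t)) (g := fun t => (v t)^2) (((((continuous_const.mul (hu.pow 2))).sub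
            ((continuous_const.mul (hu.mul hv))))).intervalIntegrable _ _)
          ((hv.pow 2).intervalIntegrable _ _),
        intervalIntegral.integral_sub (f := fun t => x^2 * (u t)^2) (g := fun t => (2*x) * (u t * v t)) ((continuous_const.mul (hu.pow 2)).intervalIntegrable _ _)
          ((continuous_const.mul (hu.mul hv)).intervalIntegrable _ _),
        intervalIntegral.integral_const_mul, intervalIntegral.integral_const_mul]
    linarith [hexp ▸ h0]
  rcases eq_or_lt_of_le hA0 with hA1 | hA1
  · have hBz : B = 0 := by
      by_contra hBne
      have hBpos : 0 < B := lt_of_le_of_ne hB0 (Ne.symm hBne)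
      have := key ((Cq+1)/(2*B))
      rw [← hA1] at this
      have h2 : (Cq+1)/(2*B)*(2*B) = Cq + 1 := by
        field_simp
      nlinarith
    rw [hBz]
    positivity
  · have h2 := key (B/A)
    have h3 : B^2 ≤ A * Cq := by
      have h4 : (B/A)^2 * A - 2*(B/A)*B + Cq = Cq - B^2/A := by
        field_simp
        ring
      rw [h4] at h2
      have h5 : B^2/A ≤ Cq := by linarith
      calc B^2 = B^2/A * A := by field_simp
        _ ≤ Cq * A := mul_le_mul_of_nonneg_right h5 hA0
        _ = A * Cq := by ring
    calc B = Real.sqrt (B^2) := (Real.sqrt_sq hB0).symm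
      _ ≤ Real.sqrt (A * Cq) := Real.sqrt_le_sqrt h3
      _ = Real.sqrt A * Real.sqrt Cq := Real.sqrt_mul hA0 _

lemma lemA (τ σ : ℝ) (hσ : 1/2 ≤ σ) (b : ℕ → ℂ) (M : ℕ) :
    (∫ t in τ..(τ+1), ‖Psum b M ((σ:ℂ) + t*I)‖^2)
      ≤ 72 * ∑ n ∈ Finset.Icc 1 M, ‖b n‖^2 := by
  set c : ℝ := τ + 1/2 with hc
  have hScont : Continuous fun t : ℝ => Psum b M ((σ:ℂ) + t*I) := contPsum b M σ
  have hwcont : Continuous fun t : ℝ => Real.exp (-(t-c)^2) :=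
    Real.continuous_exp.comp (((continuous_id.sub continuous_const).pow 2).neg)
  have hwint : Integrable (fun t : ℝ => Real.exp (-(t-c)^2)) := by
    have h0 : Integrable (fun t : ℝ => Real.exp (-1 * t^2)) := integrable_exp_neg_mul_sq one_pos
    have h1 := h0.comp_sub_right c
    simp only [neg_mul, one_mul] at h1
    exact h1
  set B : ℝ := ∑ n ∈ Finset.Icc 1 M, ‖b n‖ with hB
  have hSB : ∀ t : ℝ, ‖Psum b M ((σ:ℂ) + t*I)‖ ≤ B := by
    intro t
    refine (norm_sum_le _ _).trans (Finset.sum_le_sum fun n hn => ?_)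
    rw [norm_bexp]
    have hn1 : 1 ≤ n := (Finset.mem_Icc.mp hn).1
    have hlog : 0 ≤ Real.log n := Real.log_nonneg (by exact_mod_cast hn1)
    have hxp : Real.exp (-(σ * Real.log n)) ≤ 1 := by
      rw [Real.exp_le_one_iff]
      nlinarith
    nlinarith [norm_nonneg (b n)]
  have hint : Integrable (fun t : ℝ => Real.exp (-(t-c)^2) * ‖Psum b M ((σ:ℂ) + t*I)‖^2) := by
    apply Integrable.mono' (hwint.const_mul (B^2))
    · exact (hwcont.mul ((hScont.norm).pow 2)).aestronglyMeasurable
    · filter_upwards with t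
      have hnn : (0:ℝ) ≤ Real.exp (-(t-c)^2) * ‖Psum b M ((σ:ℂ) + t*I)‖^2 :=
        mul_nonneg (Real.exp_pos _).le (sq_nonneg _)
      rw [Real.norm_eq_abs, _root_.abs_of_nonneg hnn]
      have h1 := hSB t
      have h2 : ‖Psum b M ((σ:ℂ)+t*I)‖^2 ≤ B^2 := by
        nlinarith [norm_nonneg (Psum b M ((σ:ℂ)+t*I))]
      have h3 : (0:ℝ) < Real.exp (-(t-c)^2) := Real.exp_pos _
      calc Real.exp (-(t-c)^2) * ‖Psum b M ((σ:ℂ)+t*I)‖^2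
          ≤ Real.exp (-(t-c)^2) * B^2 := by nlinarith
        _ = B^2 * Real.exp (-(t-c)^2) := by ring
  have step1 : (∫ t in τ..(τ+1), ‖Psum b M ((σ:ℂ)+t*I)‖^2)
      ≤ 3 * ∫ t : ℝ, Real.exp (-(t-c)^2) * ‖Psum b M ((σ:ℂ)+t*I)‖^2 := by
    have hmono : ∀ t ∈ Set.Icc τ (τ+1), ‖Psum b M ((σ:ℂ)+t*I)‖^2
        ≤ 3 * (Real.exp (-(t-c)^2) * ‖Psum b M ((σ:ℂ)+t*I)‖^2) := by
      intro t ht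
      obtain ⟨ht1, ht2⟩ := ht
      have hcc : c = τ + 1/2 := hc
      have h1 : (t - c)^2 ≤ 1/4 := by nlinarith
      have h4 : Real.exp (-(1/4 : ℝ)) ≤ Real.exp (-(t-c)^2) := Real.exp_le_exp.mpr (by linarith)
      have h5 : Real.exp ((1:ℝ)/4) ≤ 3 := by
        calc Real.exp ((1:ℝ)/4) ≤ Real.exp 1 := Real.exp_le_exp.mpr (by norm_num)
          _ ≤ 3 := by have := Real.exp_one_lt_d9; linarith
      have h6 : Real.exp ((1:ℝ)/4) * Real.exp (-(1/4 : ℝ)) = 1 := by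
        rw [← Real.exp_add]; norm_num
      have h7 : 1 ≤ 3 * Real.exp (-(t-c)^2) := by
        nlinarith [Real.exp_pos (-(1/4 : ℝ))]
      nlinarith [sq_nonneg ‖Psum b M ((σ:ℂ)+t*I)‖]
    calc (∫ t in τ..(τ+1), ‖Psum b M ((σ:ℂ)+t*I)‖^2)
        ≤ ∫ t in τ..(τ+1), 3 * (Real.exp (-(t-c)^2) * ‖Psum b M ((σ:ℂ)+t*I)‖^2) := by
          apply intervalIntegral.integral_mono_on (by linarith)
            ((hScont.norm.pow 2).intervalIntegrable _ _)
            ((continuous_const.mul (hwcont.mul (hScont.norm.pow 2))).intervalIntegrable _ _)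
            hmono
      _ = 3 * ∫ t in τ..(τ+1), Real.exp (-(t-c)^2) * ‖Psum b M ((σ:ℂ)+t*I)‖^2 :=
          intervalIntegral.integral_const_mul _ _
      _ ≤ 3 * ∫ t : ℝ, Real.exp (-(t-c)^2) * ‖Psum b M ((σ:ℂ)+t*I)‖^2 := by
          have h8 : (∫ t in τ..(τ+1), Real.exp (-(t-c)^2) * ‖Psum b M ((σ:ℂ)+t*I)‖^2)
              ≤ ∫ t : ℝ, Real.exp (-(t-c)^2) * ‖Psum b M ((σ:ℂ)+t*I)‖^2 := by
            rw [intervalIntegral.integral_of_le (by linarith)]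
            exact setIntegral_le_integral hint (Filter.Eventually.of_forall fun t => by positivity)
          linarith
  have hexpand : (fun t : ℝ => Real.exp (-(t-c)^2) * ‖Psum b M ((σ:ℂ)+t*I)‖^2)
      = fun t : ℝ => ∑ m ∈ Finset.Icc 1 M, ∑ n ∈ Finset.Icc 1 M,
        (((Real.exp (-(t-c)^2) : ℝ) : ℂ) *
          ((b m * Complex.exp (-((σ:ℂ)+t*I) * Real.log m)) *
            (starRingEnd ℂ) (b n * Complex.exp (-((σ:ℂ)+t*I) * Real.log n)))).re := by
    funext t
    set S := Psum b M ((σ:ℂ)+t*I) with hS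
    have h1 : ‖S‖^2 = (S * (starRingEnd ℂ) S).re := by
      rw [Complex.mul_conj, Complex.ofReal_re, Complex.sq_norm]
    have h2 : S * (starRingEnd ℂ) S = ∑ m ∈ Finset.Icc 1 M, ∑ n ∈ Finset.Icc 1 M,
        ((b m * Complex.exp (-((σ:ℂ)+t*I) * Real.log m)) *
          (starRingEnd ℂ) (b n * Complex.exp (-((σ:ℂ)+t*I) * Real.log n))) := by
      rw [hS]
      rw [show Psum b M ((σ:ℂ)+t*I)
        = ∑ n ∈ Finset.Icc 1 M, b n * Complex.exp (-((σ:ℂ)+t*I) * Real.log n) from rfl]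
      rw [map_sum, Finset.sum_mul_sum]
    rw [h1, h2, ← Complex.re_ofReal_mul, Finset.mul_sum, Complex.re_sum]
    apply Finset.sum_congr rfl
    intro m _
    rw [Finset.mul_sum, Complex.re_sum]
  have step2 : (∫ t : ℝ, Real.exp (-(t-c)^2) * ‖Psum b M ((σ:ℂ)+t*I)‖^2)
      ≤ ∑ m ∈ Finset.Icc 1 M, ∑ n ∈ Finset.Icc 1 M, ‖b m‖ * ‖b n‖ * 2 *
        Real.exp (-σ * (Real.log m + Real.log n) - (Real.log m - Real.log n)^2/4) := by
    rw [hexpand]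
    have hIre : ∀ m n : ℕ, Integrable (fun t : ℝ => (((Real.exp (-(t-c)^2) : ℝ) : ℂ) *
        ((b m * Complex.exp (-((σ:ℂ)+t*I) * Real.log m)) *
          (starRingEnd ℂ) (b n * Complex.exp (-((σ:ℂ)+t*I) * Real.log n)))).re) volume := by
      intro m n
      exact ((entry (b m) (b n) σ c (Real.log m) (Real.log n)).1).re
    rw [integral_finset_sum _ (fun m _ => integrable_finset_sum _ (fun n _ => hIre m n))]
    refine Finset.sum_le_sum fun m _ => ?_
    rw [integral_finset_sum _ (fun n _ => hIre m n)]
    refine Finset.sum_le_sum fun n _ => ?_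
    have h3 := (entry (b m) (b n) σ c (Real.log m) (Real.log n)).1
    have h4 := (entry (b m) (b n) σ c (Real.log m) (Real.log n)).2
    have h5 : (∫ t : ℝ, (((Real.exp (-(t-c)^2) : ℝ) : ℂ) *
          ((b m * Complex.exp (-((σ:ℂ)+t*I) * Real.log m)) *
            (starRingEnd ℂ) (b n * Complex.exp (-((σ:ℂ)+t*I) * Real.log n)))).re)
        = (∫ t : ℝ, ((Real.exp (-(t-c)^2) : ℝ) : ℂ) *
          ((b m * Complex.exp (-((σ:ℂ)+t*I) * Real.log m)) *
            (starRingEnd ℂ) (b n * Complex.exp (-((σ:ℂ)+t*I) * Real.log n)))).re :=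
      integral_re (μ := volume) h3
    calc (∫ t : ℝ, (((Real.exp (-(t-c)^2) : ℝ) : ℂ) *
          ((b m * Complex.exp (-((σ:ℂ)+t*I) * Real.log m)) *
            (starRingEnd ℂ) (b n * Complex.exp (-((σ:ℂ)+t*I) * Real.log n)))).re)
        = (∫ t : ℝ, ((Real.exp (-(t-c)^2) : ℝ) : ℂ) *
          ((b m * Complex.exp (-((σ:ℂ)+t*I) * Real.log m)) *
            (starRingEnd ℂ) (b n * Complex.exp (-((σ:ℂ)+t*I) * Real.log n)))).re := h5
      _ ≤ ‖∫ t : ℝ, ((Real.exp (-(t-c)^2) : ℝ) : ℂ) *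
          ((b m * Complex.exp (-((σ:ℂ)+t*I) * Real.log m)) *
            (starRingEnd ℂ) (b n * Complex.exp (-((σ:ℂ)+t*I) * Real.log n)))‖ := by
          exact Complex.re_le_norm _
      _ ≤ ‖b m‖ * ‖b n‖ * 2 *
          Real.exp (-σ * (Real.log m + Real.log n) - (Real.log m - Real.log n)^2/4) := h4
  have step3 : (∑ m ∈ Finset.Icc 1 M, ∑ n ∈ Finset.Icc 1 M, ‖b m‖ * ‖b n‖ * 2 *
        Real.exp (-σ * (Real.log m + Real.log n) - (Real.log m - Real.log n)^2/4))
      ≤ 24 * ∑ n ∈ Finset.Icc 1 M, ‖b n‖^2 := by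
    have h1 : ∀ m ∈ Finset.Icc 1 M, ∀ n ∈ Finset.Icc 1 M,
        ‖b m‖ * ‖b n‖ * 2 * Real.exp (-σ * (Real.log m + Real.log n) - (Real.log m - Real.log n)^2/4)
        ≤ (‖b m‖^2 + ‖b n‖^2) * Real.exp (-σ * (Real.log m + Real.log n) - (Real.log m - Real.log n)^2/4) := by
      intro m _ n _
      have hE : (0:ℝ) ≤ Real.exp (-σ * (Real.log m + Real.log n) - (Real.log m - Real.log n)^2/4) :=
        (Real.exp_pos _).le
      nlinarith [sq_nonneg (‖b m‖ - ‖b n‖)]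
    calc (∑ m ∈ Finset.Icc 1 M, ∑ n ∈ Finset.Icc 1 M, ‖b m‖ * ‖b n‖ * 2 *
          Real.exp (-σ * (Real.log m + Real.log n) - (Real.log m - Real.log n)^2/4))
        ≤ ∑ m ∈ Finset.Icc 1 M, ∑ n ∈ Finset.Icc 1 M, (‖b m‖^2 + ‖b n‖^2) *
          Real.exp (-σ * (Real.log m + Real.log n) - (Real.log m - Real.log n)^2/4) :=
          Finset.sum_le_sum fun m hm => Finset.sum_le_sum (h1 m hm)
      _ = (∑ m ∈ Finset.Icc 1 M, ‖b m‖^2 * (∑ n ∈ Finset.Icc 1 M,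
            Real.exp (-σ * (Real.log m + Real.log n) - (Real.log m - Real.log n)^2/4)))
          + ∑ m ∈ Finset.Icc 1 M, ∑ n ∈ Finset.Icc 1 M, ‖b n‖^2 *
            Real.exp (-σ * (Real.log m + Real.log n) - (Real.log m - Real.log n)^2/4) := by
          rw [← Finset.sum_add_distrib]
          apply Finset.sum_congr rfl
          intro m _
          rw [Finset.mul_sum, ← Finset.sum_add_distrib]
          apply Finset.sum_congr rfl
          intro n _
          ring
      _ ≤ (∑ m ∈ Finset.Icc 1 M, ‖b m‖^2 * 12)
          + ∑ n ∈ Finset.Icc 1 M, ‖b n‖^2 * 12 := by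
          apply add_le_add
          · apply Finset.sum_le_sum
            intro m hm
            have hm1 : 1 ≤ m := (Finset.mem_Icc.mp hm).1
            exact mul_le_mul_of_nonneg_left (row σ hσ m hm1 M) (sq_nonneg _)
          · rw [Finset.sum_comm]
            apply Finset.sum_le_sum
            intro n hn
            have hn1 : 1 ≤ n := (Finset.mem_Icc.mp hn).1
            have hsym : ∀ m ∈ Finset.Icc 1 M, ‖b n‖^2 *
                Real.exp (-σ * (Real.log m + Real.log n) - (Real.log m - Real.log n)^2/4)
                = ‖b n‖^2 * Real.exp (-σ * (Real.log n + Real.log m) - (Real.log n - Real.log m)^2/4) := by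
              intro m _
              congr 2
              ring
            rw [Finset.sum_congr rfl hsym, ← Finset.mul_sum]
            exact mul_le_mul_of_nonneg_left (row σ hσ n hn1 M) (sq_nonneg _)
      _ = 24 * ∑ n ∈ Finset.Icc 1 M, ‖b n‖^2 := by
          rw [← Finset.sum_mul]
          ring
  calc (∫ t in τ..(τ+1), ‖Psum b M ((σ:ℂ)+t*I)‖^2)
      ≤ 3 * ∫ t : ℝ, Real.exp (-(t-c)^2) * ‖Psum b M ((σ:ℂ)+t*I)‖^2 := step1
    _ ≤ 3 * (24 * ∑ n ∈ Finset.Icc 1 M, ‖b n‖^2) := by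
        have := step2.trans step3
        have hnn : (0:ℝ) ≤ 3 := by norm_num
        nlinarith
    _ = 72 * ∑ n ∈ Finset.Icc 1 M, ‖b n‖^2 := by ring

lemma norm_term_congr (f : ℕ → ℂ) {s s' : ℂ} (h : s.re = s'.re) (n : ℕ) :
    ‖LSeries.term f s n‖ = ‖LSeries.term f s' n‖ := by
  rw [norm_term, norm_term, h]

end Helper18

open Helper18

set_option maxHeartbeats 2000000 in
/-- local embedding of Helson's space `𝒦 = ℋ² ⊙ ℋ²` into `H¹` of the
half-plane: there is `C > 0` such that `∫_τ^{τ+1} |f(1/2 + it)| dt ≤ C ‖f‖_𝒦` for every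
`τ ∈ ℝ` and every Dirichlet polynomial `f`. The Helson norm is handled by quantifying
over all finite representations `f = ∑_j g_j h_j` with `g_j, h_j ∈ ℋ²`. -/
theorem statement18 :
    ∃ C > 0, ∀ (τ : ℝ) (a : ℕ → ℂ) (N : ℕ), (∀ n, N < n → a n = 0) →
      ∀ (J : ℕ) (g h : Fin J → ℕ → ℂ),
        (∀ j, Summable fun n : ℕ => ‖g j (n + 1)‖ ^ 2) →
        (∀ j, Summable fun n : ℕ => ‖h j (n + 1)‖ ^ 2) →
        (∀ n : ℕ, 1 ≤ n →
          a n = ∑ j, ∑ p ∈ n.divisorsAntidiagonal, g j p.1 * h j p.2) →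
        (∫ t in τ..(τ + 1),
          ‖∑ n ∈ Finset.Icc 1 N, a n * (n : ℂ) ^ (-(1 / 2 + t * Complex.I))‖) ≤
          C * ∑ j, Real.sqrt (∑' n : ℕ, ‖g j (n + 1)‖ ^ 2) *
            Real.sqrt (∑' n : ℕ, ‖h j (n + 1)‖ ^ 2) := by
  refine ⟨72, by norm_num, ?_⟩
  intro τ a N ha0 J g h hg hh ha
  have hτ : τ ≤ τ + 1 := by linarith
  refine le_of_forall_pos_le_add fun δ hδ => ?_
  -- choice of ε and σ
  set K : ℝ := (N:ℝ) * ∑ n ∈ Finset.Icc 1 N, ‖a n‖ with hKdef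
  have hK0 : 0 ≤ K := by positivity
  set ε : ℝ := δ / (2*(K+1)) with hεdef
  have hε0 : 0 < ε := by positivity
  set σ : ℝ := 1/2 + ε with hσdef
  have hσgt : 1/2 < σ := by linarith
  have hσge : 1/2 ≤ σ := hσgt.le
  have hre : ∀ t : ℝ, ((σ:ℂ) + t*I).re = σ := by intro t; simp
  have hreσ : ((σ:ℂ)).re = σ := by simp
  -- rewrite the integrand
  have hL : ∀ t : ℝ, (∑ n ∈ Finset.Icc 1 N, a n * (n:ℂ) ^ (-(1/2 + (t:ℂ)*I)))
      = Psum a N (((1/2:ℝ):ℂ) + t*I) := by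
    intro t
    apply Finset.sum_congr rfl
    intro n hn
    have hn1 : 1 ≤ n := (Finset.mem_Icc.mp hn).1
    rw [show -((1/2:ℂ) + (t:ℂ)*I) = -((((1/2:ℝ)):ℂ) + (t:ℂ)*I) by norm_num,
      cpow_eq n hn1 ((((1/2:ℝ)):ℂ) + (t:ℂ)*I)]
  -- summability
  have hgs : ∀ (j : Fin J) (t : ℝ),
      Summable fun n => ‖LSeries.term (g j) ((σ:ℂ)+t*I) n‖ := fun j t =>
    sumNorm _ (hg j) _ (by rw [hre]; exact hσgt)
  have hhs : ∀ (j : Fin J) (t : ℝ),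
      Summable fun n => ‖LSeries.term (h j) ((σ:ℂ)+t*I) n‖ := fun j t =>
    sumNorm _ (hh j) _ (by rw [hre]; exact hσgt)
  have hgS : ∀ (j : Fin J) (t : ℝ), LSeriesSummable (g j) ((σ:ℂ)+t*I) := fun j t =>
    (hgs j t).of_norm
  have hhS : ∀ (j : Fin J) (t : ℝ), LSeriesSummable (h j) ((σ:ℂ)+t*I) := fun j t =>
    (hhs j t).of_norm
  -- identity : Psum a N = sum of products of LSeries
  have hid : ∀ t : ℝ, Psum a N ((σ:ℂ)+t*I)
      = ∑ j, LSeries (g j) ((σ:ℂ)+t*I) * LSeries (h j) ((σ:ℂ)+t*I) := by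
    intro t
    set s : ℂ := (σ:ℂ)+t*I with hs
    have h1 : LSeries a s = Psum a N s := by
      have hvan : ∀ n ∉ Finset.Icc 1 N, LSeries.term a s n = 0 := by
        intro n hn
        rcases eq_or_ne n 0 with rfl | h0
        · exact LSeries.term_zero _ _
        · rw [LSeries.term_of_ne_zero h0]
          have hN : N < n := by
            simp only [Finset.mem_Icc, not_and, not_le] at hn
            have := Nat.one_le_iff_ne_zero.mpr h0
            omega
          rw [ha0 n hN, zero_div]
      have hLS : LSeries a s = ∑' n : ℕ, LSeries.term a s n := rfl
      rw [hLS, tsum_eq_sum hvan]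
      apply Finset.sum_congr rfl
      intro n hn
      have hn1 : 1 ≤ n := (Finset.mem_Icc.mp hn).1
      rw [LSeries.term_of_ne_zero (by omega), ← cpow_eq n hn1 s, Complex.cpow_neg,
        div_eq_mul_inv]
    have h2 : ∀ n : ℕ, LSeries.term a s n
        = ∑ j, LSeries.term (LSeries.convolution (g j) (h j)) s n := by
      intro n
      rcases eq_or_ne n 0 with rfl | h0
      · simp [LSeries.term_zero]
      · rw [LSeries.term_of_ne_zero h0, ha n (Nat.one_le_iff_ne_zero.mpr h0),
          Finset.sum_div]
        apply Finset.sum_congr rfl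
        intro j _
        rw [LSeries.term_of_ne_zero h0, LSeries.convolution_def]
    have h3 : LSeries a s = ∑ j, LSeries (LSeries.convolution (g j) (h j)) s := by
      have hLS : LSeries a s = ∑' n : ℕ, LSeries.term a s n := rfl
      rw [hLS, tsum_congr h2, Summable.tsum_finsetSum (fun j _ => (hgS j t).convolution (hhS j t))]
      rfl
    rw [← h1, h3]
    apply Finset.sum_congr rfl
    intro j _
    exact LSeries_convolution' (hgS j t) (hhS j t)
  -- tail data
  set wg : Fin J → ℕ → ℝ := fun j n => ‖LSeries.term (g j) ((σ:ℂ)) n‖ with hwg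
  set wh : Fin J → ℕ → ℝ := fun j n => ‖LSeries.term (h j) ((σ:ℂ)) n‖ with hwh
  have hwgs : ∀ j, Summable (wg j) := fun j => sumNorm _ (hg j) _ (by rw [hreσ]; exact hσgt)
  have hwhs : ∀ j, Summable (wh j) := fun j => sumNorm _ (hh j) _ (by rw [hreσ]; exact hσgt)
  have hgt : ∀ (j : Fin J) (t : ℝ) (n : ℕ), ‖LSeries.term (g j) ((σ:ℂ)+t*I) n‖ = wg j n :=
    fun j t n => norm_term_congr _ (by rw [hre, hreσ]) n
  have hht : ∀ (j : Fin J) (t : ℝ) (n : ℕ), ‖LSeries.term (h j) ((σ:ℂ)+t*I) n‖ = wh j n :=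
    fun j t n => norm_term_congr _ (by rw [hre, hreσ]) n
  set Bg : Fin J → ℝ := fun j => ∑' n, wg j n with hBg
  set Bh : Fin J → ℝ := fun j => ∑' n, wh j n with hBh
  set tg : Fin J → ℕ → ℝ := fun j M => ∑' n, wg j (n + (M+1)) with htg
  set th : Fin J → ℕ → ℝ := fun j M => ∑' n, wh j (n + (M+1)) with hth
  have htail : Tendsto (fun M : ℕ => ∑ j, (tg j M * Bh j + Bg j * th j M))
      atTop (nhds 0) := by
    have h0g : ∀ j, Tendsto (tg j) atTop (nhds 0) := by
      intro j
      exact (tendsto_sum_nat_add (wg j)).comp (tendsto_add_atTop_nat 1)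
    have h0h : ∀ j, Tendsto (th j) atTop (nhds 0) := by
      intro j
      exact (tendsto_sum_nat_add (wh j)).comp (tendsto_add_atTop_nat 1)
    have := tendsto_finset_sum (Finset.univ : Finset (Fin J))
      (fun j _ => (((h0g j).mul_const (Bh j)).add ((h0h j).const_mul (Bg j))))
    simpa using this
  obtain ⟨M, hM⟩ := (htail.eventually (gt_mem_nhds (by positivity : (0:ℝ) < δ/2))).exists
  -- pointwise truncation bound
  set Q : ℝ → ℂ := fun t => ∑ j, Psum (g j) M ((σ:ℂ)+t*I) * Psum (h j) M ((σ:ℂ)+t*I) with hQ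
  have h3 : ∀ t : ℝ, ‖Psum a N ((σ:ℂ)+t*I)‖ ≤ ‖Q t‖ + δ/2 := by
    intro t
    set s : ℂ := (σ:ℂ)+t*I with hs
    have hdiff : ‖Psum a N s - Q t‖ ≤ ∑ j, (tg j M * Bh j + Bg j * th j M) := by
      rw [hid t, hQ, ← Finset.sum_sub_distrib]
      refine (norm_sum_le _ _).trans (Finset.sum_le_sum fun j _ => ?_)
      have e : LSeries (g j) s * LSeries (h j) s - Psum (g j) M s * Psum (h j) M s
          = (LSeries (g j) s - Psum (g j) M s) * LSeries (h j) s
            + Psum (g j) M s * (LSeries (h j) s - Psum (h j) M s) := by ring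
      rw [e]
      refine (norm_add_le _ _).trans ?_
      rw [norm_mul, norm_mul]
      have b1 : ‖LSeries (g j) s - Psum (g j) M s‖ ≤ tg j M := by
        refine (trunc _ _ (hgs j t) M).trans (le_of_eq ?_)
        exact tsum_congr fun n => hgt j t (n + (M+1))
      have b2 : ‖LSeries (h j) s‖ ≤ Bh j := by
        have : ‖∑' n : ℕ, LSeries.term (h j) s n‖ ≤ ∑' n : ℕ, ‖LSeries.term (h j) s n‖ :=
          norm_tsum_le_tsum_norm (hhs j t)
        refine this.trans (le_of_eq ?_)
        exact tsum_congr fun n => hht j t n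
      have b3 : ‖Psum (g j) M s‖ ≤ Bg j := by
        refine (bndP _ _ (hgs j t) M).trans (le_of_eq ?_)
        exact tsum_congr fun n => hgt j t n
      have b4 : ‖LSeries (h j) s - Psum (h j) M s‖ ≤ th j M := by
        refine (trunc _ _ (hhs j t) M).trans (le_of_eq ?_)
        exact tsum_congr fun n => hht j t (n + (M+1))
      have nn1 : (0:ℝ) ≤ ‖LSeries (h j) s‖ := norm_nonneg _
      have nn2 : (0:ℝ) ≤ ‖Psum (g j) M s‖ := norm_nonneg _
      have nn3 : 0 ≤ tg j M := tsum_nonneg fun n => norm_nonneg _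
      have nn4 : 0 ≤ Bg j := tsum_nonneg fun n => norm_nonneg _
      exact add_le_add (mul_le_mul b1 b2 nn1 nn3) (mul_le_mul b3 b4 (norm_nonneg _) nn4)
    have htri : ‖Psum a N s‖ ≤ ‖Q t‖ + ‖Psum a N s - Q t‖ := by
      have e2 : Psum a N s = Q t + (Psum a N s - Q t) := by ring
      calc ‖Psum a N s‖ = ‖Q t + (Psum a N s - Q t)‖ := by rw [← e2]
        _ ≤ ‖Q t‖ + ‖Psum a N s - Q t‖ := norm_add_le _ _
    have := hdiff.trans hM.le
    linarith
  -- closeness of the 1/2-line and σ-line polynomials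
  have h1 : ∀ t ∈ Set.Icc τ (τ+1), ‖Psum a N (((1/2:ℝ):ℂ) + t*I)‖
      ≤ ‖Psum a N ((σ:ℂ)+t*I)‖ + δ/2 := by
    intro t _
    have hdiff : ‖Psum a N (((1/2:ℝ):ℂ)+t*I) - Psum a N ((σ:ℂ)+t*I)‖ ≤ ε * K := by
      have e0 : Psum a N (((1/2:ℝ):ℂ)+t*I) - Psum a N ((σ:ℂ)+t*I)
          = ∑ n ∈ Finset.Icc 1 N, (a n * Complex.exp (-(((1/2:ℝ):ℂ)+t*I) * Real.log n)
            - a n * Complex.exp (-((σ:ℂ)+t*I) * Real.log n)) := by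
        rw [Psum, Psum, ← Finset.sum_sub_distrib]
      rw [e0]
      refine (norm_sum_le _ _).trans ?_
      have hb : ∀ n ∈ Finset.Icc 1 N,
          ‖a n * Complex.exp (-(((1/2:ℝ):ℂ)+t*I) * Real.log n)
            - a n * Complex.exp (-((σ:ℂ)+t*I) * Real.log n)‖ ≤ ‖a n‖ * (ε * N) := by
        intro n hn
        obtain ⟨hn1, hnN⟩ := Finset.mem_Icc.mp hn
        have hn0 : (1:ℝ) ≤ (n:ℝ) := by exact_mod_cast hn1
        have hLn : 0 ≤ Real.log n := Real.log_nonneg hn0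
        have hfac : Complex.exp (-((σ:ℂ)+t*I) * Real.log n)
            = Complex.exp (-(((1/2:ℝ):ℂ)+t*I) * Real.log n)
              * Complex.exp (((-(ε * Real.log n) : ℝ)):ℂ) := by
          rw [← Complex.exp_add]
          congr 1
          rw [hσdef]
          push_cast
          ring
        rw [hfac, show a n * Complex.exp (-(((1/2:ℝ):ℂ)+t*I) * Real.log n)
            - a n * (Complex.exp (-(((1/2:ℝ):ℂ)+t*I) * Real.log n)
              * Complex.exp (((-(ε * Real.log n) : ℝ)):ℂ))
          = a n * Complex.exp (-(((1/2:ℝ):ℂ)+t*I) * Real.log n)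
            * (1 - Complex.exp (((-(ε * Real.log n) : ℝ)):ℂ)) from by ring]
        rw [norm_mul, norm_bexp (a n) (1/2) t (Real.log n)]
        have hx : 0 ≤ ε * Real.log n := by positivity
        have hb1 : Real.exp (-(1/2 * Real.log n)) ≤ 1 := by
          rw [Real.exp_le_one_iff]
          nlinarith
        have hb2 : ‖(1:ℂ) - Complex.exp (((-(ε * Real.log n) : ℝ)):ℂ)‖ ≤ ε * (N:ℝ) := by
          rw [← Complex.ofReal_one, ← Complex.ofReal_exp, ← Complex.ofReal_sub,
            Complex.norm_real, Real.norm_eq_abs,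
            _root_.abs_of_nonneg (by nlinarith [Real.exp_le_one_iff.mpr (by linarith : -(ε * Real.log n) ≤ 0)])]
          have he : 1 - Real.exp (-(ε * Real.log n)) ≤ ε * Real.log n := by
            nlinarith [Real.add_one_le_exp (-(ε * Real.log n))]
          have hlogN : Real.log n ≤ (N:ℝ) := by
            calc Real.log n ≤ (n:ℝ) - 1 := Real.log_le_sub_one_of_pos (by linarith)
              _ ≤ (N:ℝ) := by
                  have : (n:ℝ) ≤ (N:ℝ) := by exact_mod_cast hnN
                  linarith
          nlinarith
        calc ‖a n‖ * Real.exp (-(1/2 * Real.log n))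
              * ‖(1:ℂ) - Complex.exp (((-(ε * Real.log n) : ℝ)):ℂ)‖
            ≤ ‖a n‖ * 1 * (ε * (N:ℝ)) := by
              apply mul_le_mul
              · exact mul_le_mul_of_nonneg_left hb1 (norm_nonneg _)
              · exact hb2
              · exact norm_nonneg _
              · positivity
          _ = ‖a n‖ * (ε * N) := by ring
      refine (Finset.sum_le_sum hb).trans (le_of_eq ?_)
      rw [← Finset.sum_mul, hKdef]
      ring
    have hεK : ε * K ≤ δ/2 := by
      have he1 : ε * (K+1) = δ/2 := by
        rw [hεdef]
        field_simp
      nlinarith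
    have htri : ‖Psum a N (((1/2:ℝ):ℂ)+t*I)‖
        ≤ ‖Psum a N ((σ:ℂ)+t*I)‖ + ‖Psum a N (((1/2:ℝ):ℂ)+t*I) - Psum a N ((σ:ℂ)+t*I)‖ := by
      have e2 : Psum a N (((1/2:ℝ):ℂ)+t*I)
          = Psum a N ((σ:ℂ)+t*I) + (Psum a N (((1/2:ℝ):ℂ)+t*I) - Psum a N ((σ:ℂ)+t*I)) := by
        ring
      calc ‖Psum a N (((1/2:ℝ):ℂ)+t*I)‖
          = ‖Psum a N ((σ:ℂ)+t*I) + (Psum a N (((1/2:ℝ):ℂ)+t*I) - Psum a N ((σ:ℂ)+t*I))‖ := by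
            rw [← e2]
        _ ≤ _ := norm_add_le _ _
    linarith
  -- continuity facts
  have hcont12 : Continuous fun t : ℝ => Psum a N (((1/2:ℝ):ℂ)+t*I) := contPsum a N (1/2)
  have hcontσ : Continuous fun t : ℝ => Psum a N ((σ:ℂ)+t*I) := contPsum a N σ
  have hcontQ : Continuous Q := by
    rw [hQ]
    apply continuous_finset_sum
    intro j _
    exact (contPsum (g j) M σ).mul (contPsum (h j) M σ)
  -- integral chain
  have int0 : (∫ t in τ..(τ+1), ‖∑ n ∈ Finset.Icc 1 N, a n * (n:ℂ) ^ (-(1/2 + (t:ℂ)*I))‖)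
      = ∫ t in τ..(τ+1), ‖Psum a N (((1/2:ℝ):ℂ)+t*I)‖ := by
    apply intervalIntegral.integral_congr
    intro t _
    exact congrArg norm (hL t)
  have int1 : (∫ t in τ..(τ+1), ‖Psum a N (((1/2:ℝ):ℂ)+t*I)‖)
      ≤ (∫ t in τ..(τ+1), ‖Psum a N ((σ:ℂ)+t*I)‖) + δ/2 := by
    have := intervalIntegral.integral_mono_on (μ := volume) hτ (hcont12.norm.intervalIntegrable _ _)
      ((hcontσ.norm.add continuous_const).intervalIntegrable _ _) h1
    simp only [Pi.add_apply] at this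
    rwa [intervalIntegral.integral_add (hcontσ.norm.intervalIntegrable _ _)
      (intervalIntegrable_const), intervalIntegral.integral_const,
      show (τ + 1 - τ) = 1 by ring, one_smul] at this
  have int2 : (∫ t in τ..(τ+1), ‖Psum a N ((σ:ℂ)+t*I)‖)
      ≤ (∫ t in τ..(τ+1), ‖Q t‖) + δ/2 := by
    have := intervalIntegral.integral_mono_on (μ := volume) hτ (hcontσ.norm.intervalIntegrable _ _)
      ((hcontQ.norm.add continuous_const).intervalIntegrable _ _) (fun t _ => h3 t)
    simp only [Pi.add_apply] at this
    rwa [intervalIntegral.integral_add (hcontQ.norm.intervalIntegrable _ _)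
      (intervalIntegrable_const), intervalIntegral.integral_const,
      show (τ + 1 - τ) = 1 by ring, one_smul] at this
  have int4 : (∫ t in τ..(τ+1), ‖Q t‖)
      ≤ 72 * ∑ j, Real.sqrt (∑' n : ℕ, ‖g j (n+1)‖^2) * Real.sqrt (∑' n : ℕ, ‖h j (n+1)‖^2) := by
    calc (∫ t in τ..(τ+1), ‖Q t‖)
        ≤ ∫ t in τ..(τ+1), ∑ j, ‖Psum (g j) M ((σ:ℂ)+t*I)‖ * ‖Psum (h j) M ((σ:ℂ)+t*I)‖ := by
          apply intervalIntegral.integral_mono_on hτ (hcontQ.norm.intervalIntegrable _ _)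
            ((continuous_finset_sum _ fun j _ =>
              ((contPsum (g j) M σ).norm.mul ((contPsum (h j) M σ).norm))).intervalIntegrable _ _)
          intro t _
          rw [hQ]
          refine (norm_sum_le _ _).trans (le_of_eq (Finset.sum_congr rfl fun j _ => norm_mul _ _))
      _ = ∑ j, ∫ t in τ..(τ+1), ‖Psum (g j) M ((σ:ℂ)+t*I)‖ * ‖Psum (h j) M ((σ:ℂ)+t*I)‖ := by
          apply intervalIntegral.integral_finset_sum
          intro j _
          exact ((contPsum (g j) M σ).norm.mul ((contPsum (h j) M σ).norm)).intervalIntegrable _ _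
      _ ≤ ∑ j, Real.sqrt (∫ t in τ..(τ+1), ‖Psum (g j) M ((σ:ℂ)+t*I)‖^2)
            * Real.sqrt (∫ t in τ..(τ+1), ‖Psum (h j) M ((σ:ℂ)+t*I)‖^2) := by
          apply Finset.sum_le_sum
          intro j _
          exact csInt _ _ _ _ hτ (contPsum (g j) M σ).norm (contPsum (h j) M σ).norm
            (fun t => norm_nonneg _) (fun t => norm_nonneg _)
      _ ≤ ∑ j, Real.sqrt (72 * ∑' n : ℕ, ‖g j (n+1)‖^2)
            * Real.sqrt (72 * ∑' n : ℕ, ‖h j (n+1)‖^2) := by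
          apply Finset.sum_le_sum
          intro j _
          apply mul_le_mul
          · apply Real.sqrt_le_sqrt
            refine (lemA τ σ hσge (g j) M).trans ?_
            have := partial_le (g j) (hg j) M
            nlinarith
          · apply Real.sqrt_le_sqrt
            refine (lemA τ σ hσge (h j) M).trans ?_
            have := partial_le (h j) (hh j) M
            nlinarith
          · exact Real.sqrt_nonneg _
          · exact Real.sqrt_nonneg _
      _ = 72 * ∑ j, Real.sqrt (∑' n : ℕ, ‖g j (n+1)‖^2) * Real.sqrt (∑' n : ℕ, ‖h j (n+1)‖^2) := by
          rw [Finset.mul_sum]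
          apply Finset.sum_congr rfl
          intro j _
          rw [Real.sqrt_mul (by norm_num : (0:ℝ) ≤ 72),
            Real.sqrt_mul (by norm_num : (0:ℝ) ≤ 72)]
          have h72 : Real.sqrt 72 * Real.sqrt 72 = 72 :=
            Real.mul_self_sqrt (by norm_num)
          linear_combination (Real.sqrt (∑' n : ℕ, ‖g j (n+1)‖^2)
            * Real.sqrt (∑' n : ℕ, ‖h j (n+1)‖^2)) * h72
  calc (∫ t in τ..(τ + 1), ‖∑ n ∈ Finset.Icc 1 N, a n * (n:ℂ) ^ (-(1/2 + (t:ℂ)*I))‖)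
      = ∫ t in τ..(τ+1), ‖Psum a N (((1/2:ℝ):ℂ)+t*I)‖ := int0
    _ ≤ 72 * (∑ j, Real.sqrt (∑' n : ℕ, ‖g j (n+1)‖^2)
        * Real.sqrt (∑' n : ℕ, ‖h j (n+1)‖^2)) + δ := by linarith
end
end
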